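/- arXiv:1508.00095 — 3 statements merged into one kernel-verified Lean document; each statement's English description precedes it below -/
import Mathlib

section
/- Let p be a prime, π a finite p-group, and R a semilocal Dedekind domain with char R = p. Then every finitely generated projective Rπ-module is a free Rπ-module. -/
open MonoidAlgebra

section Aux
variable {R : Type*} [CommRing R] {π : Type*} [Group π]

noncomputable def aug : MonoidAlgebra R π →+* R :=
  MonoidAlgebra.liftNCRingHom (RingHom.id R) (1 : π →* R) (fun _ _ => by simp [Commute.all])

@[simp] lemma aug_single (g : π) (r : R) : aug (single g r) = r := by
  simp [aug, MonoidAlgebra.liftNCRingHom]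

noncomputable def tau (g : π) : MonoidAlgebra R π := single g 1 - 1

@[simp] lemma aug_tau (g : π) : aug (tau g : MonoidAlgebra R π) = 0 := by
  simp [tau]

lemma single_mul_tau (h g : π) (r : R) :
    single h r * tau g = tau (h * g * h⁻¹) * single h r := by
  simp only [tau, sub_mul, mul_sub, one_mul, mul_one, MonoidAlgebra.single_mul_single,
    mul_one, one_mul]
  congr 2
  group

/-- product of `g - 1` over a list -/
noncomputable def gprod (l : List π) : MonoidAlgebra R π := (l.map tau).prod

@[simp] lemma tprod_nil : (gprod [] : MonoidAlgebra R π) = 1 := rfl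

lemma tprod_cons (g : π) (l : List π) :
    (gprod (g :: l) : MonoidAlgebra R π) = tau g * gprod l := by
  simp [gprod]

lemma tprod_concat (l : List π) (g : π) :
    (gprod (l ++ [g]) : MonoidAlgebra R π) = gprod l * tau g := by
  simp [gprod]

variable (R π) in
/-- span of products of `t` elements of the form `g - 1` acting on a module. -/
noncomputable def Dt (M : Type*) [AddCommGroup M] [Module (MonoidAlgebra R π) M] (t : ℕ) :
    Submodule (MonoidAlgebra R π) M :=
  Submodule.span _ {x | ∃ (l : List π), l.length = t ∧ ∃ y : M, x = (gprod l : MonoidAlgebra R π) • y}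

variable {M : Type*} [AddCommGroup M] [Module (MonoidAlgebra R π) M]

lemma tprod_smul_mem_Dt {l : List π} {t : ℕ} (hl : l.length = t) (y : M) :
    (gprod l : MonoidAlgebra R π) • y ∈ Dt R π M t :=
  Submodule.subset_span ⟨l, hl, y, rfl⟩

lemma Dt_zero_eq_top : Dt R π M 0 = ⊤ := by
  rw [eq_top_iff]
  intro y _
  have : y = (gprod [] : MonoidAlgebra R π) • y := by simp
  exact this ▸ tprod_smul_mem_Dt (l := ([] : List π)) rfl y

/-- key conjugation lemma -/
lemma tprod_smul_smul_mem {t : ℕ} {l : List π} (hl : l.length = t) {d : M}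
    (hd : d ∈ Dt R π M 1) (a : MonoidAlgebra R π) :
    (gprod l : MonoidAlgebra R π) • (a • d) ∈ Dt R π M (t + 1) := by
  unfold Dt at hd
  induction hd using Submodule.span_induction generalizing a with
  | mem x hx =>
      obtain ⟨l1, hl1, y, rfl⟩ := hx
      obtain ⟨g, rfl⟩ : ∃ g, l1 = [g] := by
        cases l1 with
        | nil => simp at hl1
        | cons g l' => cases l' with
          | nil => exact ⟨g, rfl⟩
          | cons h l'' => simp at hl1
      rw [tprod_cons, tprod_nil, mul_one]
      induction a using MonoidAlgebra.induction_linear with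
      | zero => simp
      | add a b ha hb =>
          rw [add_smul, smul_add]
          exact add_mem ha hb
      | single h r =>
          have e1 : (single h r : MonoidAlgebra R π) • (tau g : MonoidAlgebra R π) • y
              = (tau (h*g*h⁻¹) * single h r : MonoidAlgebra R π) • y := by
            rw [smul_smul, single_mul_tau]
          rw [e1, ← smul_smul (tau (h*g*h⁻¹)) (single h r) y,
            smul_smul (gprod l) (tau (h*g*h⁻¹)), ← tprod_concat]
          exact tprod_smul_mem_Dt (by simp [hl]) _
  | zero => simp
  | add x y _ _ hx hy =>
      rw [smul_add, smul_add]
      exact add_mem (hx a) (hy a)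
  | smul b x _ hx =>
      rw [smul_smul a b x]
      exact hx (a * b)


















@[simp] lemma gprod_singleton (g : π) : (gprod [g] : MonoidAlgebra R π) = tau g := by
  simp [gprod]



lemma ker_smul_mem_D1 {a : MonoidAlgebra R π} (ha : aug a = 0) (y : M) :
    a • y ∈ Dt R π M 1 := by
  have hrep : a = ∑ g ∈ a.coeff.support, single g (a.coeff g) := by
    conv_lhs => rw [← MonoidAlgebra.sum_coeff_single a]
    rfl
  have haug : ∑ g ∈ a.coeff.support, a.coeff g = 0 := by
    rw [← ha]
    conv_rhs => rw [hrep]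
    rw [map_sum]
    simp
  have key : a = ∑ g ∈ a.coeff.support, single (1:π) (a.coeff g) * tau g := by
    have : ∀ g ∈ a.coeff.support, single (1:π) (a.coeff g) * tau g
        = single g (a.coeff g) - single (1:π) (a.coeff g) := by
      intro g _
      simp [tau, mul_sub, MonoidAlgebra.single_mul_single]
    have hs : ∑ g ∈ a.coeff.support, single (1:π) (a.coeff g)
        = single (1:π) (∑ g ∈ a.coeff.support, a.coeff g) :=
      (map_sum (MonoidAlgebra.singleAddHom (R := R) (1:π)) (fun g => a.coeff g) _).symm
    rw [Finset.sum_congr rfl this, Finset.sum_sub_distrib, ← hrep,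
      hs, haug]
    simp
  have expand : a • y = ∑ g ∈ a.coeff.support, (single (1:π) (a.coeff g)) • ((tau g : MonoidAlgebra R π) • y) := by
    conv_lhs => rw [key]
    rw [Finset.sum_smul]
    exact Finset.sum_congr rfl fun g _ => mul_smul _ _ _
  rw [expand]
  refine Submodule.sum_mem _ fun g _ => Submodule.smul_mem _ _ ?_
  have := tprod_smul_mem_Dt (R := R) (l := [g]) rfl y
  rwa [gprod_singleton] at this

lemma Dt_eq_bot {m : ℕ} (hm : ∀ l : List π, l.length = m → (gprod l : MonoidAlgebra R π) = 0)
    : Dt R π M m = ⊥ := by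
  rw [Dt, Submodule.span_eq_bot]
  rintro x ⟨l, hl, y, rfl⟩
  rw [hm l hl, zero_smul]

lemma top_le_sup_Dt {N : Submodule (MonoidAlgebra R π) M} (h : ⊤ ≤ N ⊔ Dt R π M 1) :
    ∀ t, ⊤ ≤ N ⊔ Dt R π M t
  | 0 => by rw [Dt_zero_eq_top]; exact le_sup_right
  | t+1 => by
      refine le_trans (top_le_sup_Dt h t) (sup_le le_sup_left ?_)
      rw [Dt, Submodule.span_le]
      rintro x ⟨l, hl, y, rfl⟩
      obtain ⟨n, hn, d, hd, rfl⟩ := Submodule.mem_sup.mp (h (Submodule.mem_top (x := y)))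
      rw [smul_add]
      refine add_mem (Submodule.mem_sup_left (N.smul_mem _ hn)) (Submodule.mem_sup_right ?_)
      have := tprod_smul_smul_mem hl hd (1 : MonoidAlgebra R π)
      rwa [one_smul] at this

lemma map_Dt_succ {q : M →ₗ[MonoidAlgebra R π] M} (hq : ∀ x, q x ∈ Dt R π M 1) (t : ℕ) :
    ∀ x ∈ Dt R π M t, q x ∈ Dt R π M (t+1) := by
  intro x hx
  unfold Dt at hx
  induction hx using Submodule.span_induction with
  | mem x hx =>
      obtain ⟨l, hl, y, rfl⟩ := hx
      rw [map_smul]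
      have := tprod_smul_smul_mem hl (hq y) (1 : MonoidAlgebra R π)
      rwa [one_smul] at this
  | zero => simp
  | add x y _ _ hx hy => rw [map_add]; exact add_mem hx hy
  | smul a x _ hx => rw [map_smul]; exact Submodule.smul_mem _ a hx

end Aux

universe v

section Nilp
variable {p : ℕ} [hpf : Fact p.Prime] {π : Type*} [Group π] [Finite π]

lemma cast_p_eq_zero : (p : MonoidAlgebra (ZMod p) π) = 0 := by
  have := map_natCast (algebraMap (ZMod p) (MonoidAlgebra (ZMod p) π)) p
  rw [← this, ZMod.natCast_self, map_zero]

lemma ann_aux (hπ : IsPGroup p π) :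
    ∀ (n : ℕ) (M : Type v) [AddCommGroup M] [Module (MonoidAlgebra (ZMod p) π) M]
      [Finite M], Nat.card M ≤ n →
      ∃ m : ℕ, ∀ l : List π, l.length = m → ∀ x : M,
        (gprod l : MonoidAlgebra (ZMod p) π) • x = 0 := by
  intro n
  induction n with
  | zero =>
      intro M _ _ _ hM
      exact absurd (Nat.card_pos (α := M)) (by omega)
  | succ n ih =>
      intro M _ _ _ hM
      by_cases hsub : Subsingleton M
      · exact ⟨0, fun l hl x => Subsingleton.elim _ _⟩
      haveI : Nontrivial M := not_subsingleton_iff_nontrivial.mp hsub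
      -- the action of π on M
      letI : MulAction π M :=
        { smul := fun g x => (single g 1 : MonoidAlgebra (ZMod p) π) • x
          one_smul := fun x => by
            show (single (1:π) 1 : MonoidAlgebra (ZMod p) π) • x = x
            rw [← MonoidAlgebra.one_def, one_smul]
          mul_smul := fun g h x => by
            show (single (g*h) 1 : MonoidAlgebra (ZMod p) π) • x
              = (single g 1 : MonoidAlgebra (ZMod p) π) • (single h 1 : MonoidAlgebra (ZMod p) π) • x
            rw [smul_smul, MonoidAlgebra.single_mul_single, mul_one] }
      have hsmul_def : ∀ (g : π) (x : M), g • x = (single g 1 : MonoidAlgebra (ZMod p) π) • x :=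
        fun _ _ => rfl
      -- M is a p-group additively
      have hM2 : 2 ≤ Nat.card M := Finite.one_lt_card
      have hpM : IsPGroup p (Multiplicative M) := by
        intro x
        refine ⟨1, ?_⟩
        rw [pow_one]
        apply Multiplicative.toAdd.injective
        rw [toAdd_pow, toAdd_one]
        have : (p : ℕ) • x.toAdd = (p : MonoidAlgebra (ZMod p) π) • x.toAdd :=
          (Nat.cast_smul_eq_nsmul _ _ _).symm
        rw [this, cast_p_eq_zero, zero_smul]
      obtain ⟨j, hj⟩ := hpM.exists_card_eq
      have hcardM : Nat.card M = p ^ j := hj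
      have hpdvd : p ∣ Nat.card M := by
        rcases j with _ | j
        · simp [hcardM] at hM2
        · exact hcardM ▸ dvd_pow_self p (Nat.succ_ne_zero j)
      -- fixed points
      have hmod := hπ.card_modEq_card_fixedPoints M
      have hfix_dvd : p ∣ Nat.card (MulAction.fixedPoints π M) :=
        (Nat.modEq_zero_iff_dvd).mp ((hmod.symm.trans) (Nat.modEq_zero_iff_dvd.mpr hpdvd))
      have h0fix : (0 : M) ∈ MulAction.fixedPoints π M := by
        intro g
        exact (hsmul_def g 0).trans (smul_zero _)
      have hfixpos : 0 < Nat.card (MulAction.fixedPoints π M) :=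
        Nat.card_pos_iff.mpr ⟨⟨⟨0, h0fix⟩⟩, Set.Finite.to_subtype (Set.toFinite _)⟩
      have hfix2 : 2 ≤ Nat.card (MulAction.fixedPoints π M) := by
        have hp2 := hpf.out.two_le
        have := Nat.le_of_dvd hfixpos hfix_dvd
        omega
      haveI : Nontrivial (MulAction.fixedPoints π M) :=
        Finite.one_lt_card_iff_nontrivial.mp hfix2
      obtain ⟨y, hy⟩ := exists_ne (⟨0, h0fix⟩ : MulAction.fixedPoints π M)
      have hyne : (y : M) ≠ 0 := fun h => hy (Subtype.ext h)
      -- the submodule of fixed points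
      have hconst : ∀ (a : MonoidAlgebra (ZMod p) π) (x : M),
          (∀ g : π, (single g 1 : MonoidAlgebra (ZMod p) π) • x = x) →
          a • x = (single (1:π) (aug a) : MonoidAlgebra (ZMod p) π) • x := by
        intro a x hx
        induction a using MonoidAlgebra.induction_linear with
        | zero => rw [map_zero]; simp
        | add a b ha hb =>
            rw [map_add, MonoidAlgebra.single_add, add_smul, ha, hb, add_smul]
        | single h c =>
            rw [aug_single]
            calc (single h c : MonoidAlgebra (ZMod p) π) • x
                = ((single (1:π) c : MonoidAlgebra (ZMod p) π) * single h 1) • x := by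
                  rw [MonoidAlgebra.single_mul_single, one_mul, mul_one]
              _ = (single (1:π) c : MonoidAlgebra (ZMod p) π)
                    • ((single h 1 : MonoidAlgebra (ZMod p) π) • x) := mul_smul _ _ _
              _ = (single (1:π) c : MonoidAlgebra (ZMod p) π) • x := by rw [hx h]
      set F : Submodule (MonoidAlgebra (ZMod p) π) M :=
        { carrier := {x | ∀ g : π, (single g 1 : MonoidAlgebra (ZMod p) π) • x = x}
          add_mem' := fun hx hy g => by rw [smul_add, hx g, hy g]
          zero_mem' := fun g => smul_zero _
          smul_mem' := fun a x hx => by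
            intro g
            have e : (single g 1 : MonoidAlgebra (ZMod p) π) * single (1:π) (aug a)
                = single (1:π) (aug a) * single g 1 := by
              rw [MonoidAlgebra.single_mul_single, MonoidAlgebra.single_mul_single,
                mul_one, one_mul, one_mul, mul_one]
            rw [hconst a x hx, smul_smul, e, ← smul_smul, hx g] } with hF
      have hmemF : ∀ z : M, z ∈ F ↔ ∀ g : π, (single g 1 : MonoidAlgebra (ZMod p) π) • z = z :=
        fun z => Iff.rfl
      have hyF : (y : M) ∈ F := fun g => (hsmul_def g y).symm.trans (y.2 g)
      haveI : Nontrivial F := ⟨⟨⟨0, F.zero_mem⟩, ⟨y, hyF⟩, fun h => hyne (congrArg Subtype.val h).symm⟩⟩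
      have hcards : Nat.card M = Nat.card F * Nat.card (M ⧸ F) :=
        Submodule.card_eq_card_quotient_mul_card F
      haveI : Finite (M ⧸ F) := Quotient.finite _
      have hF2 : 2 ≤ Nat.card F := Finite.one_lt_card
      have hQpos : 0 < Nat.card (M ⧸ F) := Nat.card_pos
      have hQle : Nat.card (M ⧸ F) ≤ n := by
        have h2q : 2 * Nat.card (M ⧸ F) ≤ Nat.card F * Nat.card (M ⧸ F) :=
          Nat.mul_le_mul_right _ hF2
        omega
      obtain ⟨m, hm⟩ := ih (M ⧸ F) hQle
      refine ⟨m+1, fun l hl x => ?_⟩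
      cases l with
      | nil => simp at hl
      | cons g l' =>
          have hl' : l'.length = m := by simpa using hl
          have hmem : (gprod l' : MonoidAlgebra (ZMod p) π) • x ∈ F := by
            have h1 := hm l' hl' (Submodule.Quotient.mk x)
            rw [← Submodule.Quotient.mk_smul, Submodule.Quotient.mk_eq_zero] at h1
            exact h1
          have e : (gprod (g :: l') : MonoidAlgebra (ZMod p) π) = tau g * gprod l' := by
            simp [gprod]
          rw [e, mul_smul, tau, sub_smul, one_smul, (hmemF _).mp hmem g, sub_self]

lemma gprod_eq_zero (hπ : IsPGroup p π) :
    ∃ m, ∀ l : List π, l.length = m → (gprod l : MonoidAlgebra (ZMod p) π) = 0 := by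
  haveI : Finite (π →₀ ZMod p) :=
    Finite.of_injective (fun f => (f : π → ZMod p)) (DFunLike.coe_injective)
  haveI : Finite (MonoidAlgebra (ZMod p) π) := Finite.of_equiv _ MonoidAlgebra.coeffEquiv.symm
  obtain ⟨m, hm⟩ := ann_aux hπ (Nat.card (MonoidAlgebra (ZMod p) π))
    (MonoidAlgebra (ZMod p) π) le_rfl
  refine ⟨m, fun l hl => ?_⟩
  have := hm l hl 1
  rwa [smul_eq_mul, mul_one] at this

variable {R : Type*} [CommRing R] [CharP R p]

noncomputable def phiCast (p : ℕ) (R : Type*) [CommRing R] [CharP R p] (π : Type*) [Group π] :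
    MonoidAlgebra (ZMod p) π →+* MonoidAlgebra R π :=
  MonoidAlgebra.liftNCRingHom
    ((MonoidAlgebra.singleOneRingHom).comp (ZMod.castHom (dvd_refl p) R))
    (MonoidAlgebra.of R π)
    (fun a b => by
      show _ * _ = _ * _
      simp [MonoidAlgebra.singleOneRingHom, MonoidAlgebra.of_apply,
        MonoidAlgebra.single_mul_single])

lemma phiCast_tau (g : π) : phiCast p R π (tau g) = (tau g : MonoidAlgebra R π) := by
  rw [tau, map_sub, map_one, tau]
  congr 1
  show MonoidAlgebra.liftNC _ _ (single g 1) = _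
  rw [MonoidAlgebra.liftNC_single]
  simp [MonoidAlgebra.singleOneRingHom, MonoidAlgebra.of_apply,
    MonoidAlgebra.single_mul_single]

lemma gprod_eq_zero_R (hπ : IsPGroup p π) :
    ∃ m, ∀ l : List π, l.length = m → (gprod l : MonoidAlgebra R π) = 0 := by
  obtain ⟨m, hm⟩ := gprod_eq_zero (p := p) hπ
  refine ⟨m, fun l hl => ?_⟩
  have h2 := congrArg (phiCast p R π) (hm l hl)
  rw [map_zero, gprod, map_list_prod, List.map_map] at h2
  rw [show (⇑(phiCast p R π) ∘ tau : π → MonoidAlgebra R π) = tau from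
    funext fun g => phiCast_tau g] at h2
  exact h2



universe u

/-!
Statement 4: Let `p` be a prime, `π` a finite `p`-group, and `R` a semilocal Dedekind domain
(noetherian, which holds for any Dedekind domain, with only finitely many maximal ideals)
with `char R = p`.  Then every finitely generated projective `Rπ`-module is free.
-/


theorem free_of_projective_groupRing_semilocal_charP
    (p : ℕ) (hp : p.Prime)
    (R : Type u) [CommRing R] [IsDomain R] [IsDedekindDomain R] [CharP R p]
    (hsemilocal : {I : Ideal R | I.IsMaximal}.Finite)
    (π : Type u) [Group π] [Finite π] (hπ : IsPGroup p π)
    (P : Type u) [AddCommGroup P] [Module (MonoidAlgebra R π) P]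
    [Module.Finite (MonoidAlgebra R π) P]
    (hproj : Module.Projective (MonoidAlgebra R π) P) :
    Module.Free (MonoidAlgebra R π) P := by
  classical
  haveI := Fact.mk hp
  -- R is a PID
  haveI hPID : IsPrincipalIdealRing R := by
    refine IsPrincipalIdealRing.of_finite_primes (Set.Finite.subset (hsemilocal.insert ⊥) ?_)
    intro I hI
    by_cases hbot : I = ⊥
    · exact Set.mem_insert_iff.mpr (Or.inl hbot)
    · exact Set.mem_insert_iff.mpr (Or.inr (hI.isMaximal hbot))
  -- nilpotency of the augmentation ideal
  obtain ⟨m, hnil⟩ := gprod_eq_zero_R (p := p) (R := R) (π := π) hπ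
  -- a finite presentation of P
  obtain ⟨k, f0, hf0⟩ := Module.Finite.exists_fin (R := MonoidAlgebra R π) (M := P)
  set F0 : (Fin k →₀ MonoidAlgebra R π) →ₗ[MonoidAlgebra R π] P :=
    Finsupp.linearCombination (MonoidAlgebra R π) f0 with hF0def
  have hF0 : Function.Surjective F0 := by
    rw [← LinearMap.range_eq_top, hF0def, Finsupp.range_linearCombination, hf0]
  obtain ⟨σ, hσ⟩ := Module.projective_lifting_property F0 LinearMap.id hF0
  -- restriction of scalars to R
  letI : Module R P := Module.compHom P (algebraMap R (MonoidAlgebra R π))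
  haveI : IsScalarTower R (MonoidAlgebra R π) P :=
    ⟨fun r a x => by
      show (r • a) • x = (algebraMap R (MonoidAlgebra R π) r) • (a • x)
      rw [Algebra.smul_def, mul_smul]⟩
  have hsmulRP : ∀ (r : R) (x : P), r • x = (algebraMap R (MonoidAlgebra R π) r) • x :=
    fun _ _ => rfl
  -- the reduction map
  have aug_algebraMap : ∀ r : R, aug (algebraMap R (MonoidAlgebra R π) r) = r := by
    intro r
    have : algebraMap R (MonoidAlgebra R π) r = single (1:π) r := rfl
    rw [this, aug_single]
  set Φ : P →ₗ[R] (Fin k → R) :=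
    { toFun := fun x i => aug ((σ x) i)
      map_add' := fun x y => by
        funext i
        show aug ((σ (x + y)) i) = aug ((σ x) i) + aug ((σ y) i)
        rw [map_add, Finsupp.add_apply, map_add]
      map_smul' := fun r x => by
        funext i
        show aug ((σ (r • x)) i) = r * aug ((σ x) i)
        rw [hsmulRP, map_smul, Finsupp.smul_apply, smul_eq_mul, map_mul, aug_algebraMap] }
    with hΦdef
  have hΦ_apply : ∀ (x : P) (i : Fin k), Φ x i = aug ((σ x) i) := fun _ _ => rfl
  -- Dt P 1 ≤ ker Φ
  have hDkerΦ : ∀ x ∈ Dt R π P 1, Φ x = 0 := by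
    intro x hx
    unfold Dt at hx
    induction hx using Submodule.span_induction with
    | mem x hx =>
        obtain ⟨l, hl, y, rfl⟩ := hx
        obtain ⟨g, rfl⟩ : ∃ g, l = [g] := by
          cases l with
          | nil => simp at hl
          | cons g l' => cases l' with
            | nil => exact ⟨g, rfl⟩
            | cons h l'' => simp at hl
        funext i
        rw [hΦ_apply, gprod_singleton, map_smul, Finsupp.smul_apply, smul_eq_mul,
          map_mul, aug_tau, zero_mul]
        rfl
    | zero => rw [map_zero]
    | add x y _ _ hx hy => rw [map_add, hx, hy, add_zero]
    | smul a x _ hx =>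
        funext i
        rw [hΦ_apply, map_smul, Finsupp.smul_apply, smul_eq_mul, map_mul]
        have : aug ((σ x) i) = 0 := by
          have := congrFun hx i
          rwa [hΦ_apply] at this
        rw [this, mul_zero]
        rfl
  -- ker Φ ≤ Dt P 1
  have hkerΦD : ∀ x : P, Φ x = 0 → x ∈ Dt R π P 1 := by
    intro x hx
    have hxF : x = F0 (σ x) := by
      have := congrArg (fun (f : P →ₗ[MonoidAlgebra R π] P) => f x) hσ
      simpa using this.symm
    rw [hxF, hF0def, Finsupp.linearCombination_apply, Finsupp.sum]
    refine Submodule.sum_mem _ fun i _ => ?_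
    refine ker_smul_mem_D1 ?_ (f0 i)
    have := congrFun hx i
    rwa [hΦ_apply] at this
  -- the quotient module
  letI : Module R (P ⧸ Dt R π P 1) :=
    Module.compHom _ (algebraMap R (MonoidAlgebra R π))
  have hsmulRQ : ∀ (r : R) (x : P ⧸ Dt R π P 1),
      r • x = (algebraMap R (MonoidAlgebra R π) r) • x := fun _ _ => rfl
  haveI : NoZeroSMulDivisors R (P ⧸ Dt R π P 1) := by
    refine ⟨fun {r x} h => ?_⟩
    obtain ⟨y, rfl⟩ := Submodule.Quotient.mk_surjective _ x
    rw [hsmulRQ, ← Submodule.Quotient.mk_smul, Submodule.Quotient.mk_eq_zero] at h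
    have h2 : Φ (algebraMap R (MonoidAlgebra R π) r • y) = 0 := hDkerΦ _ h
    rw [← hsmulRP, map_smul] at h2
    rcases smul_eq_zero.mp h2 with hr | hΦy
    · exact Or.inl hr
    · exact Or.inr ((Submodule.Quotient.mk_eq_zero _).mpr (hkerΦD y hΦy))
  -- finiteness over R
  haveI : Module.Finite R (MonoidAlgebra R π) :=
    Module.Finite.of_basis (MonoidAlgebra.basis π R)
  haveI : Module.Finite R P := Module.Finite.trans (MonoidAlgebra R π) P
  haveI : Module.Finite R (P ⧸ Dt R π P 1) := by
    refine Module.Finite.of_surjective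
      (R := R) (S := R) (σ := RingHom.id R) (M := P) (P := P ⧸ Dt R π P 1)
      { toFun := Submodule.Quotient.mk
        map_add' := fun a b => by rw [Submodule.Quotient.mk_add]
        map_smul' := fun r a => by
          show (Submodule.Quotient.mk ((algebraMap R (MonoidAlgebra R π)) r • a)
              : P ⧸ Dt R π P 1) = (RingHom.id R r) • Submodule.Quotient.mk a
          rw [Submodule.Quotient.mk_smul (Dt R π P 1), RingHom.id_apply, ← hsmulRQ] }
      (Submodule.Quotient.mk_surjective _)
  haveI : Module.Free R (P ⧸ Dt R π P 1) := Module.free_of_finite_type_torsion_free'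
  -- choose a basis and lift it
  set ι := Module.Free.ChooseBasisIndex R (P ⧸ Dt R π P 1) with hι
  haveI : Fintype ι := Module.Free.ChooseBasisIndex.fintype R (P ⧸ Dt R π P 1)
  set b : Module.Basis ι R (P ⧸ Dt R π P 1) := Module.Free.chooseBasis R (P ⧸ Dt R π P 1) with hb
  have hpy : ∀ i : ι, ∃ z : P, Submodule.Quotient.mk z = b i :=
    fun i => Submodule.Quotient.mk_surjective _ (b i)
  choose py hpy using hpy
  set FF : (ι →₀ MonoidAlgebra R π) →ₗ[MonoidAlgebra R π] P :=
    Finsupp.linearCombination (MonoidAlgebra R π) py with hFFdef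
  have hFF_single : ∀ (i : ι) (a : MonoidAlgebra R π), FF (Finsupp.single i a) = a • py i := by
    intro i a
    rw [hFFdef, Finsupp.linearCombination_single]
  -- each `a • py i` is congruent to `aug a • b i` mod `Dt P 1`
  have hmk_smul : ∀ (a : MonoidAlgebra R π) (i : ι),
      (Submodule.Quotient.mk (a • py i) : P ⧸ Dt R π P 1) = aug a • b i := by
    intro a i
    have hdiff : a • py i - algebraMap R (MonoidAlgebra R π) (aug a) • py i ∈ Dt R π P 1 := by
      have : a • py i - algebraMap R (MonoidAlgebra R π) (aug a) • py i
          = (a - algebraMap R (MonoidAlgebra R π) (aug a)) • py i := by rw [sub_smul]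
      rw [this]
      refine ker_smul_mem_D1 ?_ (py i)
      rw [map_sub, aug_algebraMap, sub_self]
    calc (Submodule.Quotient.mk (a • py i) : P ⧸ Dt R π P 1)
        = Submodule.Quotient.mk (algebraMap R (MonoidAlgebra R π) (aug a) • py i) :=
          (Submodule.Quotient.eq _).mpr hdiff
      _ = aug a • b i := by
          rw [Submodule.Quotient.mk_smul, hpy i, ← hsmulRQ]
  have hmk_sum : ∀ (α : Type u) (s : Finset α) (f : α → P),
      (Submodule.Quotient.mk (∑ i ∈ s, f i) : P ⧸ Dt R π P 1)
        = ∑ i ∈ s, (Submodule.Quotient.mk (f i) : P ⧸ Dt R π P 1) :=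
    fun α s f => map_sum ((Dt R π P 1).mkQ) f s
  -- FF is surjective
  have hbase : ⊤ ≤ LinearMap.range FF ⊔ Dt R π P 1 := by
    intro x _
    set c : ι → R := fun i => b.repr (Submodule.Quotient.mk x) i with hc
    set s : P := ∑ i, algebraMap R (MonoidAlgebra R π) (c i) • py i with hs
    have hsrange : s ∈ LinearMap.range FF := by
      rw [hs]
      refine Submodule.sum_mem _ fun i _ => ?_
      exact ⟨Finsupp.single i (algebraMap R (MonoidAlgebra R π) (c i)), hFF_single i _⟩
    have hxd : x - s ∈ Dt R π P 1 := by
      rw [← Submodule.Quotient.mk_eq_zero, Submodule.Quotient.mk_sub]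
      have hmks : (Submodule.Quotient.mk s : P ⧸ Dt R π P 1)
          = Submodule.Quotient.mk x := by
        rw [hs]
        have : (Submodule.Quotient.mk (∑ i, algebraMap R (MonoidAlgebra R π) (c i) • py i)
            : P ⧸ Dt R π P 1) = ∑ i, c i • b i := by
          rw [hmk_sum]
          refine Finset.sum_congr rfl fun i _ => ?_
          rw [Submodule.Quotient.mk_smul, hpy i, ← hsmulRQ]
        rw [this, hc]
        exact b.sum_repr _
      rw [hmks, sub_self]
    have hdecomp : x = s + (x - s) := by abel
    rw [hdecomp]
    exact Submodule.add_mem_sup hsrange hxd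
  have hsurj : Function.Surjective FF := by
    have h1 := top_le_sup_Dt hbase m
    rw [Dt_eq_bot hnil, sup_bot_eq] at h1
    rw [← LinearMap.range_eq_top]
    exact top_le_iff.mp h1
  -- FF is injective
  obtain ⟨G, hG⟩ := Module.projective_lifting_property FF LinearMap.id hsurj
  set prj : (ι →₀ MonoidAlgebra R π) →ₗ[MonoidAlgebra R π] (ι →₀ MonoidAlgebra R π) :=
    LinearMap.id - G.comp FF with hprj
  have hprj_ker : ∀ z, FF (prj z) = 0 := by
    intro z
    rw [hprj]
    simp only [LinearMap.sub_apply, LinearMap.id_apply, LinearMap.comp_apply, map_sub]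
    have : FF (G (FF z)) = FF z := by
      have := congrArg (fun (f : P →ₗ[MonoidAlgebra R π] P) => f (FF z)) hG
      simpa using this
    rw [this, sub_self]
  have hprj_fix : ∀ z ∈ LinearMap.ker FF, prj z = z := by
    intro z hz
    rw [hprj]
    simp only [LinearMap.sub_apply, LinearMap.id_apply, LinearMap.comp_apply]
    rw [LinearMap.mem_ker.mp hz, map_zero, sub_zero]
  have hker_le_D1 : LinearMap.ker FF ≤ Dt R π (ι →₀ MonoidAlgebra R π) 1 := by
    intro z hz
    have hcomp : ∀ i, aug (z i) = 0 := by
      have hsum0 : (0 : P ⧸ Dt R π P 1) = ∑ i, aug (z i) • b i := by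
        have h1 : (Submodule.Quotient.mk (FF z) : P ⧸ Dt R π P 1) = 0 := by
          rw [LinearMap.mem_ker.mp hz, Submodule.Quotient.mk_zero]
        have h2 : FF z = ∑ i ∈ z.support, z i • py i := by
          rw [hFFdef, Finsupp.linearCombination_apply, Finsupp.sum]
        have h3 : (Submodule.Quotient.mk (FF z) : P ⧸ Dt R π P 1)
            = ∑ i ∈ z.support, aug (z i) • b i := by
          rw [h2, hmk_sum]
          exact Finset.sum_congr rfl fun i _ => hmk_smul (z i) i
        have h4 : ∑ i ∈ z.support, aug (z i) • b i = ∑ i, aug (z i) • b i := by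
          refine Finset.sum_subset (Finset.subset_univ _) fun i _ hi => ?_
          rw [Finsupp.notMem_support_iff.mp hi, map_zero, zero_smul]
        rw [← h4, ← h3, h1]
      have hli := Fintype.linearIndependent_iff.mp b.linearIndependent (fun i => aug (z i))
        (by rw [← hsum0])
      exact hli
    have hz_dec : z = ∑ i ∈ z.support, Finsupp.single i (z i) := by
      conv_lhs => rw [← Finsupp.sum_single z]
      rfl
    rw [hz_dec]
    refine Submodule.sum_mem _ fun i _ => ?_
    have : (Finsupp.single i (z i) : ι →₀ MonoidAlgebra R π)
        = (z i) • Finsupp.single i (1 : MonoidAlgebra R π) := by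
      rw [Finsupp.smul_single, smul_eq_mul, mul_one]
    rw [this]
    exact ker_smul_mem_D1 (hcomp i) _
  have hker_le : ∀ t : ℕ, LinearMap.ker FF ≤ Dt R π (ι →₀ MonoidAlgebra R π) (t+1) := by
    intro t
    induction t with
    | zero => exact hker_le_D1
    | succ t ih =>
        intro z hz
        have h1 : prj z ∈ Dt R π (ι →₀ MonoidAlgebra R π) (t+2) := by
          refine map_Dt_succ (q := prj) ?_ (t+1) z (ih hz)
          intro w
          exact hker_le_D1 (LinearMap.mem_ker.mpr (hprj_ker w))
        rwa [hprj_fix z hz] at h1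
  have hker : LinearMap.ker FF = ⊥ := by
    rw [eq_bot_iff, ← Dt_eq_bot (M := ι →₀ MonoidAlgebra R π) hnil]
    cases m with
    | zero => rw [Dt_zero_eq_top]; exact le_top
    | succ t => exact hker_le t
  have hbij : Function.Bijective FF := ⟨LinearMap.ker_eq_bot.mp hker, hsurj⟩
  exact Module.Free.of_equiv (LinearEquiv.ofBijective FF hbij)
end Nilp
end

section
/- Let R be a commutative noetherian integral domain with char R = p > 0 and let π be a finite group with p dividing |π| whose p-Sylow subgroup π_p is normal in π; write π' = π/π_p and assume the group extension 1 → π_p → π → π' → 1 splits. Then every finitely generated projective Rπ-module is isomorphic to Rπ ⊗_{Rπ'} P₀ for some finitely generated projective Rπ'-module P₀. -/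
/-!
Statement 17 (Remark after Lemma 4.6): Let `R` be a commutative noetherian integral domain
with `char R = p > 0`, `π` a finite group with `p ∣ |π|` whose `p`-Sylow subgroup `π_p` is
normal, `π' = π/π_p`, and suppose the extension `1 → π_p → π → π' → 1` splits, via a section
`s : π' →* π`.  Then every finitely generated projective `Rπ`-module is isomorphic to
`Rπ ⊗_{Rπ'} P₀` for some finitely generated projective `Rπ'`-module `P₀`, where `Rπ'` is
embedded in `Rπ` along `s` and the tensor product `Rπ ⊗_{Rπ'} P₀` is realized as the
quotient of `Rπ ⊗_R P₀` by the relations `a·s(g) ⊗ q = a ⊗ g·q` (`g ∈ π'`).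
-/

universe u

open TensorProduct

/-- `Rπ ⊗_{RH} N` for a group homomorphism (e.g. a subgroup embedding) `s : H →* π` and an
`RH`-module `N`: the quotient of `Rπ ⊗_R N` by the relations `a·s(g) ⊗ q = a ⊗ g·q`. -/
noncomputable abbrev inducedAlong (R : Type u) [CommRing R] {π H : Type u} [Group π] [Group H]
    (s : H →* π) (N : Type u) [AddCommGroup N] [Module R N] [Module (MonoidAlgebra R H) N]
    [IsScalarTower R (MonoidAlgebra R H) N] : Type u :=
  (TensorProduct R (MonoidAlgebra R π) N) ⧸
    (Submodule.span (MonoidAlgebra R π)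
      {x | ∃ (g : H) (q : N),
        x = (MonoidAlgebra.of R π (s g)) ⊗ₜ[R] q
          - 1 ⊗ₜ[R] ((MonoidAlgebra.of R H g) • q)})

open MonoidAlgebra

namespace SwanAux

variable {R : Type u} [CommRing R] {G : Type u} [Group G]

/-- The augmentation-type submodule of a group algebra. -/
noncomputable def augJ (R : Type u) [CommRing R] (G : Type u) [Group G] :
    Submodule R (MonoidAlgebra R G) :=
  Submodule.span R {x | ∃ g : G, x = of R G g - 1}

lemma sub_one_mem_augJ (g : G) : of R G g - 1 ∈ augJ R G :=
  Submodule.subset_span ⟨g, rfl⟩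

lemma of_sub_of_mem (y x : G) (h : y⁻¹ * x ∈ (⊤ : Subgroup G)) : True := trivial

lemma of_sub_of_eq (y x : G) :
    of R G x - of R G y = of R G y * (of R G (y⁻¹ * x) - 1) := by
  rw [mul_sub, mul_one, of_apply, of_apply, of_apply, MonoidAlgebra.single_mul_single, one_mul,
    mul_inv_cancel_left]

/-- Any element killed by `mapDomain` to the quotient lies in the span of the
elements `g·(h-1)`, `h ∈ N`. -/
lemma ker_mapDomain_le (N : Subgroup G) (a : MonoidAlgebra R G)
    (ha : MonoidAlgebra.mapDomain (fun x : G => (x : G ⧸ N)) a = 0) :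
    a ∈ Submodule.span R {x | ∃ g h, h ∈ N ∧ x = of R G g * (of R G h - 1)} := by
  set f : G → G := fun x : G => (((x : G ⧸ N)).out : G) with hf
  have key : ∀ b : MonoidAlgebra R G,
      b - MonoidAlgebra.mapDomain f b ∈
        Submodule.span R {x | ∃ g h, h ∈ N ∧ x = of R G g * (of R G h - 1)} := by
    intro b
    induction b using MonoidAlgebra.induction_on with
    | of g =>
      have hyx : ((f g : G) : G ⧸ N) = (g : G ⧸ N) := QuotientGroup.out_eq' _
      have hmem : (f g)⁻¹ * g ∈ N := (QuotientGroup.eq).mp hyx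
      have : MonoidAlgebra.mapDomain f (of R G g) = of R G (f g) := by
        rw [of_apply, of_apply]; exact MonoidAlgebra.mapDomain_single
      rw [this, of_sub_of_eq]
      exact Submodule.subset_span ⟨f g, (f g)⁻¹ * g, hmem, rfl⟩
    | add u v hu hv =>
      have hma : MonoidAlgebra.mapDomain f (u + v)
          = MonoidAlgebra.mapDomain f u + MonoidAlgebra.mapDomain f v := MonoidAlgebra.mapDomain_add _ _ _
      rw [hma]
      have : u + v - (MonoidAlgebra.mapDomain f u + MonoidAlgebra.mapDomain f v)
          = (u - MonoidAlgebra.mapDomain f u) + (v - MonoidAlgebra.mapDomain f v) := by abel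
      rw [this]; exact Submodule.add_mem _ hu hv
    | smul r b hb =>
      have hms : MonoidAlgebra.mapDomain f (r • b) = r • MonoidAlgebra.mapDomain f b :=
        MonoidAlgebra.mapDomain_smul _ _ _
      rw [hms, ← smul_sub]
      exact Submodule.smul_mem _ _ hb
  have h2 : MonoidAlgebra.mapDomain f a = 0 := by
    have hcomp : f = (fun q : G ⧸ N => (q.out : G)) ∘ (fun x : G => (x : G ⧸ N)) := rfl
    rw [show MonoidAlgebra.mapDomain f a = MonoidAlgebra.mapDomain (fun q : G ⧸ N => (q.out : G))
        (MonoidAlgebra.mapDomain (fun x : G => (x : G ⧸ N)) a) by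
      rw [hcomp]; ext1; simp [Finsupp.mapDomain_comp], ha, MonoidAlgebra.mapDomain_zero]
  have := key a
  rwa [h2, sub_zero] at this

end SwanAux

namespace SwanAux2
open SwanAux

variable {R : Type u} [CommRing R]

lemma of_central_commute {G : Type u} [Group G] {z : G} (hz : z ∈ Subgroup.center G)
    (a : MonoidAlgebra R G) : Commute (of R G z) a := by
  induction a using MonoidAlgebra.induction_on with
  | of g =>
    have : z * g = g * z := (Subgroup.mem_center_iff.mp hz g).symm
    unfold Commute SemiconjBy
    rw [of_apply, of_apply, MonoidAlgebra.single_mul_single, MonoidAlgebra.single_mul_single,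
      one_mul, this]
  | add u v hu hv => exact hu.add_right hv
  | smul r b hb => exact hb.smul_right r

lemma charP_monoidAlgebra (p : ℕ) [CharP R p] (G : Type u) [Group G] :
    CharP (MonoidAlgebra R G) p :=
  charP_of_injective_ringHom (f := MonoidAlgebra.singleOneRingHom (R := R) (M := G))
    (fun a b hab => by simpa [MonoidAlgebra.singleOneRingHom] using
      (MonoidAlgebra.single_right_injective (m := (1 : G))) hab) p

lemma pow_le_pow_of_le {A : Type u} [Semiring A] [Algebra R A] {X Y : Submodule R A}
    (h : X ≤ Y) : ∀ m : ℕ, X ^ m ≤ Y ^ m := by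
  intro m
  induction m with
  | zero => simp
  | succ k ih => rw [pow_succ, pow_succ]; exact mul_le_mul' ih h

theorem augJ_pow_eq_bot (p : ℕ) [hfp : Fact p.Prime] [CharP R p] :
    ∀ (n : ℕ) (G : Type u) [Group G] [Fintype G], Fintype.card G ≤ n → IsPGroup p G →
      ∃ m : ℕ, (augJ R G) ^ m = ⊥ := by
  intro n
  induction n with
  | zero =>
    intro G _ _ hcard _
    exact absurd (lt_of_lt_of_le Fintype.card_pos hcard) (by simp)
  | succ n ih =>
    intro G _ _ hcard hG
    rcases subsingleton_or_nontrivial G with hsub | hnt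
    · refine ⟨1, ?_⟩
      rw [pow_one, eq_bot_iff, augJ]
      refine Submodule.span_le.mpr ?_
      rintro x ⟨g, rfl⟩
      have hg : g = 1 := Subsingleton.elim g 1
      have : of R G g - 1 = 0 := by rw [hg, map_one, sub_self]
      rw [this]
      simp
    · -- find a central element of order p
      haveI : Finite G := inferInstance
      haveI hcenter : Nontrivial (Subgroup.center G) := hG.center_nontrivial
      have hGc : IsPGroup p (Subgroup.center G) := hG.to_subgroup _
      haveI : Fintype (Subgroup.center G) := Fintype.ofFinite _
      obtain ⟨k, hk⟩ := (IsPGroup.iff_card (p := p)).mp hGc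
      rw [Nat.card_eq_fintype_card] at hk
      have hk0 : k ≠ 0 := by
        intro h0
        rw [h0, pow_zero] at hk
        exact absurd hk Fintype.one_lt_card.ne'
      obtain ⟨zc, hzc⟩ := exists_prime_orderOf_dvd_card (G := Subgroup.center G) p
        (hk ▸ dvd_pow_self p hk0)
      set z : G := (zc : G) with hzdef
      have hzcen : z ∈ Subgroup.center G := zc.2
      have hordz : orderOf z = p := by rw [← hzc]; exact Subgroup.orderOf_coe zc
      have hz1 : z ≠ 1 := by
        intro h1
        rw [h1, orderOf_one] at hordz
        exact hfp.out.ne_one hordz.symm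
      set Z : Subgroup G := Subgroup.zpowers z with hZ
      have hZle : Z ≤ Subgroup.center G := Subgroup.zpowers_le.mpr hzcen
      haveI hZN : Z.Normal := by
        constructor
        intro h hh g
        have : h * g = g * h := (Subgroup.mem_center_iff.mp (hZle hh) g).symm
        rw [← this, mul_assoc, mul_inv_cancel, mul_one]
        exact hh
      haveI : Finite (G ⧸ Z) := Quotient.finite _
      haveI : Fintype (G ⧸ Z) := Fintype.ofFinite _
      have hcardZ : Nat.card Z = p := by
        rw [hZ, Nat.card_zpowers, hordz]
      have hlt : Fintype.card (G ⧸ Z) < Fintype.card G := by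
        have hmul := Subgroup.card_eq_card_quotient_mul_card_subgroup (s := Z)
        rw [hcardZ, Nat.card_eq_fintype_card, Nat.card_eq_fintype_card] at hmul
        have h1 : 0 < Fintype.card (G ⧸ Z) := Fintype.card_pos
        have h2 := hfp.out.one_lt
        nlinarith
      obtain ⟨m, hm⟩ := ih (G ⧸ Z) (by omega) (IsPGroup.to_quotient hG Z)
      -- transfer along the quotient map
      set ρ : MonoidAlgebra R G →ₐ[R] MonoidAlgebra R (G ⧸ Z) :=
        MonoidAlgebra.mapDomainAlgHom R R (QuotientGroup.mk' Z) with hρ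
      have hρof : ∀ g : G, ρ (of R G g) = of R (G ⧸ Z) (g : G ⧸ Z) := by
        intro g
        rw [of_apply, of_apply]
        exact MonoidAlgebra.mapDomain_single
      have hmapJ : Submodule.map ρ.toLinearMap (augJ R G) ≤ augJ R (G ⧸ Z) := by
        rw [augJ, Submodule.map_span, Submodule.span_le]
        rintro x ⟨y, ⟨g, rfl⟩, rfl⟩
        refine Submodule.subset_span ?_
        refine ⟨(g : G ⧸ Z), ?_⟩
        have hcoe : ρ.toLinearMap (of R G g - 1) = ρ (of R G g - 1) := rfl
        rw [hcoe, map_sub, map_one, hρof]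
      have hker : ∀ x ∈ (augJ R G) ^ m, ρ x = 0 := by
        intro x hx
        have : ρ x ∈ Submodule.map ρ.toLinearMap ((augJ R G) ^ m) := ⟨x, hx, rfl⟩
        rw [Submodule.map_pow] at this
        have h2 := pow_le_pow_of_le hmapJ m this
        rw [hm] at h2
        simpa using h2
      -- the kernel is contained in the range of right multiplication by (of z - 1)
      set w : MonoidAlgebra R G := of R G z - 1 with hw
      have hKer_le : ∀ x : MonoidAlgebra R G, ρ x = 0 →
          x ∈ LinearMap.range (LinearMap.mulRight R w) := by
        intro x hx
        have hx' : MonoidAlgebra.mapDomain (fun g : G => (g : G ⧸ Z)) x = 0 := hx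
        have := ker_mapDomain_le Z x hx'
        refine Submodule.span_le.mpr ?_ this
        rintro y ⟨g, h, hh, rfl⟩
        have hh' : h ∈ Subgroup.zpowers z := by rwa [hZ] at hh
        obtain ⟨kk, hkk⟩ := mem_powers_iff_mem_zpowers.mpr hh'
        have hofh : of R G h = of R G z ^ kk := by rw [← hkk, map_pow]
        refine ⟨of R G g * (∑ i ∈ Finset.range kk, of R G z ^ i), ?_⟩
        rw [LinearMap.mulRight_apply, mul_assoc, hw, geom_sum_mul, hofh]
      -- powers of that range
      haveI := charP_monoidAlgebra (R := R) p G
      have hwp : w ^ p = 0 := by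
        have hc : Commute (of R G z) (1 : MonoidAlgebra R G) := Commute.one_right _
        have hzp : z ^ p = 1 := by rw [← hordz]; exact pow_orderOf_eq_one z
        rw [hw, sub_pow_char_of_commute _ hc, one_pow, ← map_pow, hzp, map_one, sub_self]
      have hKpow : ∀ j : ℕ,
          (LinearMap.range (LinearMap.mulRight R w) : Submodule R (MonoidAlgebra R G)) ^ j ≤
            LinearMap.range (LinearMap.mulRight R (w ^ j)) := by
        intro j
        induction j with
        | zero => simp
        | succ i ihh =>
          rw [pow_succ]
          refine Submodule.mul_le.mpr ?_
          rintro x hx y hy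
          obtain ⟨a, rfl⟩ : ∃ a, a * w ^ i = x := by
            obtain ⟨a, ha⟩ := ihh hx; exact ⟨a, ha⟩
          obtain ⟨b, rfl⟩ := hy
          refine ⟨a * b, ?_⟩
          have hcw : Commute (w ^ i) b := by
            have h1 : Commute (of R G z) b := of_central_commute hzcen b
            have h2 : Commute (1 : MonoidAlgebra R G) b := Commute.one_left b
            exact (h1.sub_left h2).pow_left i
          rw [LinearMap.mulRight_apply, LinearMap.mulRight_apply, pow_succ]
          symm
          simp only [mul_assoc]
          rw [← mul_assoc (w ^ i) b w, hcw.eq, mul_assoc]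
      refine ⟨m * p, ?_⟩
      rw [eq_bot_iff, pow_mul]
      have h1 : (augJ R G) ^ m ≤ LinearMap.range (LinearMap.mulRight R w) := by
        intro x hx
        exact hKer_le x (hker x hx)
      refine le_trans (pow_le_pow_of_le h1 p) (le_trans (hKpow p) ?_)
      rw [hwp]
      rintro x ⟨y, rfl⟩
      simp
end SwanAux2

namespace SwanD
open SwanAux MonoidAlgebra

variable {R : Type u} [CommRing R] {π : Type u} [Group π] (Np : Subgroup π)
variable {V : Type u} [AddCommGroup V] [Module (MonoidAlgebra R π) V]

/-- The span of the sets `(h-1)•N` for `h ∈ Np`. -/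
noncomputable def DD (N : Submodule (MonoidAlgebra R π) V) : Submodule (MonoidAlgebra R π) V :=
  Submodule.span (MonoidAlgebra R π)
    {x | ∃ h ∈ Np, ∃ m ∈ N, x = ((of R π h : MonoidAlgebra R π) - 1) • m}

lemma sub_one_smul_mem (N : Submodule (MonoidAlgebra R π) V) {h : π} (hh : h ∈ Np) {m : V}
    (hm : m ∈ N) : ((of R π h : MonoidAlgebra R π) - 1) • m ∈ N := by
  rw [sub_smul, one_smul]
  exact N.sub_mem (N.smul_mem _ hm) hm

lemma DD_le (N : Submodule (MonoidAlgebra R π) V) : DD Np N ≤ N := by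
  rw [DD, Submodule.span_le]
  rintro x ⟨h, hh, m, hm, rfl⟩
  exact sub_one_smul_mem Np N hh hm

lemma mem_DD (N : Submodule (MonoidAlgebra R π) V) {h : π} (hh : h ∈ Np) (m : V) (hm : m ∈ N) :
    ((of R π h : MonoidAlgebra R π) - 1) • m ∈ DD Np N :=
  Submodule.subset_span ⟨h, hh, m, hm, rfl⟩

lemma DD_mono {N N' : Submodule (MonoidAlgebra R π) V} (h : N ≤ N') : DD Np N ≤ DD Np N' := by
  rw [DD, Submodule.span_le]
  rintro x ⟨g, hg, m, hm, rfl⟩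
  exact mem_DD Np N' hg m (h hm)

lemma DD_sup (X Y : Submodule (MonoidAlgebra R π) V) : DD Np (X ⊔ Y) ≤ X ⊔ DD Np Y := by
  rw [DD, Submodule.span_le]
  rintro x ⟨h, hh, m, hm, rfl⟩
  obtain ⟨mx, hmx, my, hmy, rfl⟩ := Submodule.mem_sup.mp hm
  rw [smul_add]
  exact Submodule.add_mem _
    (Submodule.mem_sup_left (sub_one_smul_mem Np X hh hmx))
    (Submodule.mem_sup_right (mem_DD Np Y hh my hmy))

/-- Iterates of `DD`. -/
noncomputable def DDiter : ℕ → Submodule (MonoidAlgebra R π) V → Submodule (MonoidAlgebra R π) V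
  | 0, N => N
  | (k+1), N => DD Np (DDiter k N)

lemma DDiter_mono {N N' : Submodule (MonoidAlgebra R π) V} (h : N ≤ N') (k : ℕ) :
    DDiter Np k N ≤ DDiter Np k N' := by
  induction k with
  | zero => exact h
  | succ k ih => exact DD_mono Np ih

lemma DDiter_succ_eq (N : Submodule (MonoidAlgebra R π) V) (k : ℕ) :
    DDiter Np k (DD Np N) = DDiter Np (k+1) N := by
  induction k with
  | zero => rfl
  | succ k ih => show DD Np (DDiter Np k (DD Np N)) = _; rw [ih]; rfl

lemma DDiter_sup (X Y : Submodule (MonoidAlgebra R π) V) (k : ℕ) :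
    DDiter Np k (X ⊔ Y) ≤ X ⊔ DDiter Np k Y := by
  induction k with
  | zero => exact le_rfl
  | succ k ih =>
    show DD Np (DDiter Np k (X ⊔ Y)) ≤ _
    refine le_trans (DD_mono Np ih) ?_
    refine le_trans (DD_sup Np X (DDiter Np k Y)) le_rfl

/-- The span of `h - 1`, `h ∈ Np` inside the big group algebra. -/
noncomputable def JJ : Submodule R (MonoidAlgebra R π) :=
  Submodule.span R {x | ∃ h ∈ Np, x = (of R π h : MonoidAlgebra R π) - 1}

/-- The submodule generated by `c • m` with `c ∈ JJ^n`. -/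
noncomputable def MM (n : ℕ) : Submodule (MonoidAlgebra R π) V :=
  Submodule.span (MonoidAlgebra R π) {x | ∃ c ∈ (JJ (R := R) Np) ^ n, ∃ m : V, x = c • m}

lemma top_le_MM0 : (⊤ : Submodule (MonoidAlgebra R π) V) ≤ MM Np 0 := by
  intro x _
  have h1 : (1 : MonoidAlgebra R π) ∈ (JJ (R := R) Np) ^ 0 := by
    rw [pow_zero, Submodule.one_eq_span]
    exact Submodule.subset_span rfl
  exact Submodule.subset_span ⟨1, h1, x, (one_smul _ x).symm⟩

lemma MM_mem_of_mem {n : ℕ} {c : MonoidAlgebra R π} (hc : c ∈ (JJ (R := R) Np) ^ n) (m : V) :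
    c • m ∈ (MM Np n : Submodule (MonoidAlgebra R π) V) :=
  Submodule.subset_span ⟨c, hc, m, rfl⟩

lemma DD_MM [hNorm : Np.Normal] (n : ℕ) :
    DD Np (MM Np n : Submodule (MonoidAlgebra R π) V) ≤ MM Np (n+1) := by
  rw [DD, Submodule.span_le]
  rintro x ⟨h, hh, m, hm, rfl⟩
  revert h
  refine Submodule.span_induction
    (p := fun m _ => ∀ h ∈ Np, ((of R π h : MonoidAlgebra R π) - 1) • m ∈ MM Np (n+1))
    ?_ ?_ ?_ ?_ hm
  · rintro x ⟨c, hc, m', rfl⟩ h hh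
    rw [← mul_smul]
    refine MM_mem_of_mem Np ?_ m'
    rw [pow_succ']
    exact Submodule.mul_mem_mul (Submodule.subset_span ⟨h, hh, rfl⟩) hc
  · intro h hh
    rw [smul_zero]
    exact Submodule.zero_mem _
  · intro x y _ _ hx hy h hh
    rw [smul_add]
    exact Submodule.add_mem _ (hx h hh) (hy h hh)
  · intro a x _ hx
    -- reduce to the case of a group element, by induction on a
    induction a using MonoidAlgebra.induction_on with
    | of g =>
      intro h hh
      have key : ((of R π h : MonoidAlgebra R π) - 1) * of R π g
          = of R π g * ((of R π (g⁻¹ * h * g) : MonoidAlgebra R π) - 1) := by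
        rw [sub_mul, mul_sub, one_mul, mul_one]
        congr 1
        have hgr : h * g = g * (g⁻¹ * h * g) := by group
        rw [← map_mul, ← map_mul, hgr]
      rw [← mul_smul, key, mul_smul]
      have hconj : g⁻¹ * h * g ∈ Np := by
        have := hNorm.conj_mem h hh g⁻¹
        simpa using this
      exact Submodule.smul_mem _ _ (hx (g⁻¹ * h * g) hconj)
    | add u v hu hv =>
      intro h hh
      rw [← mul_smul, mul_add, add_smul]
      exact Submodule.add_mem _ (by rw [mul_smul]; exact hu h hh) (by rw [mul_smul]; exact hv h hh)
    | smul r a ha =>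
      intro h hh
      rw [← mul_smul, mul_smul_comm, Algebra.smul_def, mul_smul]
      exact Submodule.smul_mem _ _ (by rw [mul_smul]; exact ha h hh)

lemma MM_eq_bot {n : ℕ} (hn : (JJ (R := R) Np) ^ n = ⊥) :
    (MM Np n : Submodule (MonoidAlgebra R π) V) = ⊥ := by
  rw [MM, eq_bot_iff, Submodule.span_le]
  rintro x ⟨c, hc, m, rfl⟩
  rw [hn] at hc
  have : c = 0 := hc
  rw [this, zero_smul]
  simp

lemma DDiter_top_le_MM [Np.Normal] (k : ℕ) :
    DDiter Np k (⊤ : Submodule (MonoidAlgebra R π) V) ≤ MM Np k := by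
  induction k with
  | zero => exact top_le_MM0 Np
  | succ k ih =>
    show DD Np (DDiter Np k ⊤) ≤ _
    exact le_trans (DD_mono Np ih) (DD_MM Np k)

theorem eq_bot_of_le_DD [Np.Normal] {n : ℕ} (hn : (JJ (R := R) Np) ^ n = ⊥)
    (S : Submodule (MonoidAlgebra R π) V) (h : S ≤ DD Np S) : S = ⊥ := by
  have hiter : ∀ k, S ≤ DDiter Np k S := by
    intro k
    induction k with
    | zero => exact le_rfl
    | succ k ih =>
      show S ≤ DD Np (DDiter Np k S)
      exact le_trans h (DD_mono Np ih)
  have h1 : S ≤ DDiter Np n ⊤ := le_trans (hiter n) (DDiter_mono Np le_top n)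
  have h2 := le_trans h1 (le_trans (DDiter_top_le_MM Np n) (le_of_eq (MM_eq_bot Np hn)))
  exact le_bot_iff.mp h2

theorem eq_top_of_sup_DD [Np.Normal] {n : ℕ} (hn : (JJ (R := R) Np) ^ n = ⊥)
    (S : Submodule (MonoidAlgebra R π) V) (h : ⊤ ≤ S ⊔ DD Np ⊤) : S = ⊤ := by
  have key : ∀ k, (⊤ : Submodule (MonoidAlgebra R π) V) ≤ S ⊔ DDiter Np k ⊤ := by
    intro k
    induction k with
    | zero => exact le_sup_right
    | succ k ih =>
      have h3 : DDiter Np k (⊤ : Submodule (MonoidAlgebra R π) V)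
          ≤ S ⊔ DDiter Np (k+1) ⊤ := by
        refine le_trans (DDiter_mono Np h k) ?_
        refine le_trans (DDiter_sup Np S (DD Np ⊤) k) ?_
        rw [DDiter_succ_eq]
      refine le_trans ih ?_
      refine sup_le (le_trans le_sup_left le_rfl) ?_
      exact le_trans h3 (sup_le le_sup_left le_sup_right)
  have := key n
  have h2 : DDiter Np n (⊤ : Submodule (MonoidAlgebra R π) V) = ⊥ :=
    le_bot_iff.mp (le_trans (DDiter_top_le_MM Np n) (le_of_eq (MM_eq_bot Np hn)))
  rw [h2, sup_bot_eq] at this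
  exact top_le_iff.mp this

end SwanD

namespace SwanBridge
open SwanAux SwanAux2 SwanD MonoidAlgebra

variable {R : Type u} [CommRing R]

lemma JJ_pow_eq_bot (p : ℕ) [Fact p.Prime] [CharP R p] {π : Type u} [Group π] [Fintype π]
    (Np : Subgroup π) (hNp : IsPGroup p Np) :
    ∃ n : ℕ, (JJ (R := R) Np) ^ n = ⊥ := by
  haveI : Fintype Np := Fintype.ofFinite _
  obtain ⟨m, hm⟩ := augJ_pow_eq_bot (R := R) p (Fintype.card Np) Np le_rfl hNp
  set ι : MonoidAlgebra R Np →ₐ[R] MonoidAlgebra R π :=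
    MonoidAlgebra.mapDomainAlgHom R R Np.subtype with hι
  have hιof : ∀ h : Np, ι (of R Np h) = of R π (h : π) := by
    intro h
    rw [of_apply, of_apply]
    exact MonoidAlgebra.mapDomain_single
  have hmap : Submodule.map ι.toLinearMap (augJ R Np) = JJ (R := R) Np := by
    apply le_antisymm
    · rw [augJ, Submodule.map_span, Submodule.span_le]
      rintro x ⟨y, ⟨h, rfl⟩, rfl⟩
      refine Submodule.subset_span ⟨(h : π), h.2, ?_⟩
      show ι (of R Np h - 1) = _
      rw [map_sub, map_one, hιof]
    · rw [JJ, Submodule.span_le]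
      rintro x ⟨h, hh, rfl⟩
      refine Submodule.mem_map.mpr ⟨of R Np ⟨h, hh⟩ - 1, Submodule.subset_span ⟨⟨h, hh⟩, rfl⟩, ?_⟩
      show ι (of R Np ⟨h, hh⟩ - 1) = _
      rw [map_sub, map_one, hιof]
  refine ⟨m, ?_⟩
  rw [← hmap, ← Submodule.map_pow, hm, Submodule.map_bot]

end SwanBridge


section Main
open TensorProduct SwanAux SwanAux2 SwanD SwanBridge MonoidAlgebra

set_option maxHeartbeats 1000000 in
theorem projective_groupRing_induced_from_quotient_of_split
    (R : Type u) [CommRing R] [IsDomain R] [IsNoetherianRing R]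
    (p : ℕ) [CharP R p] (hp : p ≠ 0)
    (π : Type u) [Group π] [Fintype π] (hdvd : p ∣ Fintype.card π)
    (π_p : Sylow p π) [hN : (π_p : Subgroup π).Normal]
    (s : (π ⧸ (π_p : Subgroup π)) →* π)
    (hs : ∀ x, QuotientGroup.mk' (π_p : Subgroup π) (s x) = x)
    (P : Type u) [AddCommGroup P] [Module (MonoidAlgebra R π) P]
    [Module.Finite (MonoidAlgebra R π) P]
    (hproj : Module.Projective (MonoidAlgebra R π) P) :
    ∃ (P₀ : Type u) (_ : AddCommGroup P₀) (_ : Module R P₀)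
      (_ : Module (MonoidAlgebra R (π ⧸ (π_p : Subgroup π))) P₀)
      (_ : IsScalarTower R (MonoidAlgebra R (π ⧸ (π_p : Subgroup π))) P₀),
      Module.Finite (MonoidAlgebra R (π ⧸ (π_p : Subgroup π))) P₀ ∧
      Module.Projective (MonoidAlgebra R (π ⧸ (π_p : Subgroup π))) P₀ ∧
      Nonempty (P ≃ₗ[MonoidAlgebra R π] inducedAlong R s P₀) := by
  classical
  haveI := hproj
  have hpp : p.Prime := (CharP.char_is_prime_or_zero R p).resolve_right hp
  haveI : Fact p.Prime := ⟨hpp⟩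
  obtain ⟨n0, hn0⟩ := JJ_pow_eq_bot (R := R) p (π_p : Subgroup π) π_p.isPGroup'
  -- the two ring homomorphisms
  set φ : MonoidAlgebra R π →+* MonoidAlgebra R (π ⧸ (π_p : Subgroup π)) :=
    MonoidAlgebra.mapDomainRingHom R (QuotientGroup.mk' (π_p : Subgroup π)) with hφdef
  set σ : MonoidAlgebra R (π ⧸ (π_p : Subgroup π)) →+* MonoidAlgebra R π :=
    MonoidAlgebra.mapDomainRingHom R s with hσdef
  have hφσ : ∀ b, φ (σ b) = b := by
    intro b
    show MonoidAlgebra.ofCoeff (Finsupp.mapDomain (⇑(QuotientGroup.mk' (π_p : Subgroup π)))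
      (Finsupp.mapDomain (⇑s) b.coeff)) = b
    rw [← Finsupp.mapDomain_comp]
    have hc : (⇑(QuotientGroup.mk' (π_p : Subgroup π)) ∘ ⇑s) = id := by
      funext x; exact hs x
    rw [hc, Finsupp.mapDomain_id]
  have hσ_of : ∀ g' : π ⧸ (π_p : Subgroup π),
      σ (of R (π ⧸ (π_p : Subgroup π)) g') = of R π (s g') := by
    intro g'
    show MonoidAlgebra.mapDomain (⇑s) (MonoidAlgebra.single g' 1) = MonoidAlgebra.single (s g') 1
    exact MonoidAlgebra.mapDomain_single
  have hφ_of : ∀ g : π, φ (of R π g) = of R (π ⧸ (π_p : Subgroup π)) ((g : π ⧸ (π_p : Subgroup π))) := by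
    intro g
    show MonoidAlgebra.mapDomain (⇑(QuotientGroup.mk' (π_p : Subgroup π))) (MonoidAlgebra.single g 1) = _
    exact MonoidAlgebra.mapDomain_single
  have hσalg : ∀ r : R, σ (algebraMap R (MonoidAlgebra R (π ⧸ (π_p : Subgroup π))) r)
      = algebraMap R (MonoidAlgebra R π) r := by
    intro r
    show MonoidAlgebra.mapDomain (⇑s) (MonoidAlgebra.single 1 r) = MonoidAlgebra.single 1 r
    rw [MonoidAlgebra.mapDomain_single, map_one]
  -- module structures
  letI instRP : Module R P := Module.compHom P (algebraMap R (MonoidAlgebra R π))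
  haveI instTowerP : IsScalarTower R (MonoidAlgebra R π) P :=
    ⟨fun r a m => by
      show (r • a) • m = algebraMap R (MonoidAlgebra R π) r • (a • m)
      rw [Algebra.smul_def, mul_smul]⟩
  haveI instSMulCommP : SMulCommClass R (MonoidAlgebra R π) P :=
    ⟨fun r a m => by
      show algebraMap R (MonoidAlgebra R π) r • (a • m)
        = a • (algebraMap R (MonoidAlgebra R π) r • m)
      rw [← mul_smul, ← mul_smul, Algebra.commutes r a]⟩
  -- the submodule IP and the quotient module P₀
  set IP : Submodule (MonoidAlgebra R π) P := DD (R := R) (π_p : Subgroup π) ⊤ with hIPdef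
  have kerφ_smul : ∀ a : MonoidAlgebra R π, φ a = 0 → ∀ m : P, a • m ∈ IP := by
    intro a ha
    have ha' : MonoidAlgebra.mapDomain (fun x : π => (x : π ⧸ (π_p : Subgroup π))) a = 0 := ha
    have hsp := ker_mapDomain_le (R := R) (π_p : Subgroup π) a ha'
    refine Submodule.span_induction
      (p := fun a _ => ∀ m : P, a • m ∈ IP) ?_ ?_ ?_ ?_ hsp
    · rintro x ⟨g, h, hh, rfl⟩ m
      rw [mul_smul]
      exact Submodule.smul_mem _ _ (mem_DD (π_p : Subgroup π) ⊤ hh m Submodule.mem_top)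
    · intro m; rw [zero_smul]; exact Submodule.zero_mem _
    · intro x y _ _ hx hy m
      rw [add_smul]; exact Submodule.add_mem _ (hx m) (hy m)
    · intro r x _ hx m
      have : (r • x) • m = algebraMap R (MonoidAlgebra R π) r • (x • m) := by
        rw [Algebra.smul_def, mul_smul]
      rw [this]
      exact Submodule.smul_mem _ _ (hx m)
  letI instB0 : Module (MonoidAlgebra R (π ⧸ (π_p : Subgroup π))) (P ⧸ IP) :=
    Module.compHom _ σ
  letI instR0 : Module R (P ⧸ IP) := Module.compHom _ (algebraMap R (MonoidAlgebra R π))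
  haveI instTower0 : IsScalarTower R (MonoidAlgebra R (π ⧸ (π_p : Subgroup π))) (P ⧸ IP) :=
    ⟨fun r b q => by
      show σ (r • b) • q = algebraMap R (MonoidAlgebra R π) r • (σ b • q)
      have h1 : σ (r • b) = algebraMap R (MonoidAlgebra R π) r * σ b := by
        rw [Algebra.smul_def, map_mul, hσalg r]
      rw [h1, mul_smul]⟩
  have smulP0 : ∀ (a : MonoidAlgebra R π) (q : P ⧸ IP), a • q = σ (φ a) • q := by
    intro a q
    obtain ⟨m, rfl⟩ := Submodule.Quotient.mk_surjective IP q
    rw [← Submodule.Quotient.mk_smul, ← Submodule.Quotient.mk_smul]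
    refine ((Submodule.Quotient.eq IP).mpr ?_)
    rw [← sub_smul]
    apply kerφ_smul
    rw [map_sub, hφσ, sub_self]
  -- finiteness of P₀ over B
  haveI hfinQ : Module.Finite (MonoidAlgebra R π) (P ⧸ IP) :=
    Module.Finite.of_surjective IP.mkQ (Submodule.Quotient.mk_surjective IP)
  obtain ⟨Sfin, hSfin⟩ := hfinQ.fg_top
  have hBspan : Submodule.span (MonoidAlgebra R (π ⧸ (π_p : Subgroup π)))
      (Sfin : Set (P ⧸ IP)) = ⊤ := by
    set SB := Submodule.span (MonoidAlgebra R (π ⧸ (π_p : Subgroup π)))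
      (Sfin : Set (P ⧸ IP)) with hSB
    have hsm : ∀ (a : MonoidAlgebra R π) {x : P ⧸ IP}, x ∈ SB → a • x ∈ SB := by
      intro a x hx
      rw [smulP0]
      exact SB.smul_mem (φ a) hx
    set SA : Submodule (MonoidAlgebra R π) (P ⧸ IP) :=
      { carrier := SB
        add_mem' := fun h1 h2 => SB.add_mem h1 h2
        zero_mem' := SB.zero_mem
        smul_mem' := fun a x hx => hsm a hx } with hSA
    have hle : (⊤ : Submodule (MonoidAlgebra R π) (P ⧸ IP)) ≤ SA := by
      rw [← hSfin]
      exact Submodule.span_le.mpr (fun x hx => Submodule.subset_span hx)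
    rw [eq_top_iff]
    intro x _
    exact hle Submodule.mem_top
  haveI finB : Module.Finite (MonoidAlgebra R (π ⧸ (π_p : Subgroup π))) (P ⧸ IP) :=
    ⟨⟨Sfin, hBspan⟩⟩
  -- projectivity of P₀ over B
  letI instBP : Module (MonoidAlgebra R (π ⧸ (π_p : Subgroup π))) P := Module.compHom P σ
  obtain ⟨sec, hsec⟩ := Module.projective_def.mp hproj
  letI instAF0 : Module (MonoidAlgebra R π)
      (P →₀ MonoidAlgebra R (π ⧸ (π_p : Subgroup π))) := Module.compHom _ φ
  set φstar : (P →₀ MonoidAlgebra R π) →ₗ[MonoidAlgebra R π]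
      (P →₀ MonoidAlgebra R (π ⧸ (π_p : Subgroup π))) :=
    { toFun := fun y => Finsupp.mapRange ⇑φ (map_zero φ) y
      map_add' := fun y z => Finsupp.mapRange_add (map_add φ) y z
      map_smul' := fun a y => by
        show Finsupp.mapRange ⇑φ (map_zero φ) (a • y) = φ a • Finsupp.mapRange ⇑φ (map_zero φ) y
        refine Finsupp.ext fun j => ?_
        show φ ((a • y) j) = (φ a • Finsupp.mapRange ⇑φ (map_zero φ) y) j
        rw [Finsupp.smul_apply, Finsupp.smul_apply, smul_eq_mul, smul_eq_mul, map_mul,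
          Finsupp.mapRange_apply] } with hφstar
  set icomp : P →ₗ[MonoidAlgebra R π] (P →₀ MonoidAlgebra R (π ⧸ (π_p : Subgroup π))) :=
    φstar.comp sec with hicomp
  have hIPker : IP ≤ LinearMap.ker icomp := by
    rw [hIPdef, DD, Submodule.span_le]
    rintro x ⟨h, hh, m, _, rfl⟩
    rw [SetLike.mem_coe, LinearMap.mem_ker, map_smul]
    show φ ((of R π h : MonoidAlgebra R π) - 1) • icomp m = 0
    have hzero : φ ((of R π h : MonoidAlgebra R π) - 1) = 0 := by
      rw [map_sub, map_one, hφ_of]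
      have h1 : ((h : π ⧸ (π_p : Subgroup π))) = 1 := (QuotientGroup.eq_one_iff h).mpr hh
      rw [h1, map_one, sub_self]
    rw [hzero, zero_smul]
  set i0A : (P ⧸ IP) →ₗ[MonoidAlgebra R π]
      (P →₀ MonoidAlgebra R (π ⧸ (π_p : Subgroup π))) :=
    Submodule.liftQ IP icomp hIPker with hi0A
  set i0 : (P ⧸ IP) →ₗ[MonoidAlgebra R (π ⧸ (π_p : Subgroup π))]
      (P →₀ MonoidAlgebra R (π ⧸ (π_p : Subgroup π))) :=
    { toFun := fun q => i0A q
      map_add' := fun x y => map_add i0A x y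
      map_smul' := fun b q => by
        show i0A (σ b • q) = b • i0A q
        rw [map_smul]
        show φ (σ b) • i0A q = b • i0A q
        rw [hφσ] } with hi0
  set g0 : (P →₀ MonoidAlgebra R (π ⧸ (π_p : Subgroup π)))
      →ₗ[MonoidAlgebra R (π ⧸ (π_p : Subgroup π))] (P ⧸ IP) :=
    { toFun := fun y => IP.mkQ (Finsupp.linearCombination (MonoidAlgebra R π) (id : P → P)
        (Finsupp.mapRange ⇑σ (map_zero σ) y))
      map_add' := fun y z => by
        show IP.mkQ (Finsupp.linearCombination (MonoidAlgebra R π) (id : P → P)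
            (Finsupp.mapRange ⇑σ (map_zero σ) (y + z))) = _
        rw [Finsupp.mapRange_add (map_add σ), map_add, map_add]
      map_smul' := fun b y => by
        show IP.mkQ (Finsupp.linearCombination (MonoidAlgebra R π) (id : P → P)
            (Finsupp.mapRange ⇑σ (map_zero σ) (b • y))) = _
        have h1 : Finsupp.mapRange ⇑σ (map_zero σ) (b • y)
            = σ b • Finsupp.mapRange ⇑σ (map_zero σ) y := by
          refine Finsupp.ext fun j => ?_
          show σ ((b • y) j) = (σ b • Finsupp.mapRange ⇑σ (map_zero σ) y) j
          rw [Finsupp.smul_apply, Finsupp.smul_apply, smul_eq_mul, smul_eq_mul, map_mul,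
            Finsupp.mapRange_apply]
        rw [h1, map_smul, map_smul]
        rfl } with hg0
  have lcIP : ∀ w : P →₀ (MonoidAlgebra R π), (∀ j, φ (w j) = 0) →
      Finsupp.linearCombination (MonoidAlgebra R π) (id : P → P) w ∈ IP := by
    intro w hw
    rw [Finsupp.linearCombination_apply]
    refine Submodule.sum_mem _ ?_
    intro j _
    exact kerφ_smul (w j) (hw j) j
  have hsplit : g0 ∘ₗ i0 = LinearMap.id := by
    apply LinearMap.ext
    intro q
    obtain ⟨m, rfl⟩ := Submodule.Quotient.mk_surjective IP q
    show g0 (i0A (Submodule.Quotient.mk m)) = Submodule.Quotient.mk m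
    have h1 : i0A (Submodule.Quotient.mk m) = φstar (sec m) := by
      rw [hi0A]
      exact Submodule.liftQ_apply IP icomp m
    rw [h1]
    show IP.mkQ (Finsupp.linearCombination (MonoidAlgebra R π) (id : P → P)
      (Finsupp.mapRange ⇑σ (map_zero σ) (Finsupp.mapRange ⇑φ (map_zero φ) (sec m))))
      = Submodule.Quotient.mk m
    have hdiff : Finsupp.linearCombination (MonoidAlgebra R π) (id : P → P)
        (Finsupp.mapRange ⇑σ (map_zero σ) (Finsupp.mapRange ⇑φ (map_zero φ) (sec m))) - m ∈ IP := by
      have hm : Finsupp.linearCombination (MonoidAlgebra R π) (id : P → P) (sec m) = m := hsec m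
      have h9 := lcIP (Finsupp.mapRange ⇑σ (map_zero σ)
          (Finsupp.mapRange ⇑φ (map_zero φ) (sec m)) - sec m) ?_
      · rw [map_sub, hm] at h9
        exact h9
      · intro j
        rw [Finsupp.sub_apply, Finsupp.mapRange_apply, Finsupp.mapRange_apply, map_sub, hφσ,
          sub_self]
    exact (Submodule.Quotient.eq IP).mpr hdiff
  haveI : Module.Projective (MonoidAlgebra R (π ⧸ (π_p : Subgroup π)))
      (P →₀ MonoidAlgebra R (π ⧸ (π_p : Subgroup π))) :=
    Module.Projective.of_basis Finsupp.basisSingleOne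
  haveI projB : Module.Projective (MonoidAlgebra R (π ⧸ (π_p : Subgroup π))) (P ⧸ IP) :=
    Module.Projective.of_split i0 g0 hsplit
  -- the B-linear section t of the quotient map
  set mkQB : P →ₗ[MonoidAlgebra R (π ⧸ (π_p : Subgroup π))] (P ⧸ IP) :=
    { toFun := fun m => IP.mkQ m
      map_add' := fun x y => map_add IP.mkQ x y
      map_smul' := fun b m => by
        show IP.mkQ (σ b • m) = σ b • IP.mkQ m
        exact map_smul IP.mkQ (σ b) m } with hmkQB
  have hmkQBsurj : Function.Surjective mkQB := Submodule.Quotient.mk_surjective IP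
  obtain ⟨tmap, htmap⟩ := Module.projective_lifting_property mkQB LinearMap.id hmkQBsurj
  have ht : ∀ q, IP.mkQ (tmap q) = q := fun q => DFunLike.congr_fun htmap q
  -- the A-linear map F1 : A ⊗[R] P₀ → P
  set χ : (P ⧸ IP) →ₗ[R] P :=
    { toFun := fun q => tmap q
      map_add' := fun x y => map_add tmap x y
      map_smul' := fun r q => by
        show tmap (r • q) = r • tmap q
        have h1 : (r • q : P ⧸ IP)
            = (algebraMap R (MonoidAlgebra R (π ⧸ (π_p : Subgroup π))) r) • q := by
          show algebraMap R (MonoidAlgebra R π) r • q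
            = σ (algebraMap R (MonoidAlgebra R (π ⧸ (π_p : Subgroup π))) r) • q
          rw [hσalg]
        rw [h1, map_smul]
        show σ (algebraMap R (MonoidAlgebra R (π ⧸ (π_p : Subgroup π))) r) • tmap q
          = r • tmap q
        rw [hσalg]
        rfl } with hχ
  set ψ : MonoidAlgebra R π →ₗ[MonoidAlgebra R π] ((P ⧸ IP) →ₗ[R] P) :=
    LinearMap.toSpanSingleton (MonoidAlgebra R π) _ χ with hψ
  set F1 : (TensorProduct R (MonoidAlgebra R π) (P ⧸ IP)) →ₗ[MonoidAlgebra R π] P :=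
    TensorProduct.AlgebraTensorModule.lift ψ with hF1
  have hF1tmul : ∀ (a : MonoidAlgebra R π) (q : P ⧸ IP), F1 (a ⊗ₜ[R] q) = a • tmap q := by
    intro a q
    rw [hF1, TensorProduct.AlgebraTensorModule.lift_tmul, hψ, LinearMap.toSpanSingleton_apply,
      LinearMap.smul_apply]
    rfl
  set rel : Submodule (MonoidAlgebra R π) (TensorProduct R (MonoidAlgebra R π) (P ⧸ IP)) :=
    Submodule.span (MonoidAlgebra R π)
      {x | ∃ (g : π ⧸ (π_p : Subgroup π)) (q : P ⧸ IP),
        x = (MonoidAlgebra.of R π (s g)) ⊗ₜ[R] q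
          - 1 ⊗ₜ[R] ((MonoidAlgebra.of R (π ⧸ (π_p : Subgroup π)) g) • q)} with hreldef
  have hrelker : rel ≤ LinearMap.ker F1 := by
    rw [hreldef, Submodule.span_le]
    rintro x ⟨g, q, rfl⟩
    rw [SetLike.mem_coe, LinearMap.mem_ker, map_sub, hF1tmul, hF1tmul, one_smul]
    have h2 : tmap ((MonoidAlgebra.of R (π ⧸ (π_p : Subgroup π)) g) • q)
        = σ (MonoidAlgebra.of R (π ⧸ (π_p : Subgroup π)) g) • tmap q :=
      map_smul tmap _ q
    rw [h2, hσ_of, sub_self]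
  set f : (TensorProduct R (MonoidAlgebra R π) (P ⧸ IP)) ⧸ rel →ₗ[MonoidAlgebra R π] P :=
    Submodule.liftQ rel F1 hrelker with hf
  have hfone : ∀ q : P ⧸ IP,
      f (Submodule.Quotient.mk ((1 : MonoidAlgebra R π) ⊗ₜ[R] q)) = tmap q := by
    intro q
    rw [hf, Submodule.liftQ_apply, hF1tmul, one_smul]
  -- surjectivity
  have hsup : (⊤ : Submodule (MonoidAlgebra R π) P)
      ≤ LinearMap.range f ⊔ DD (R := R) (π_p : Subgroup π) ⊤ := by
    intro m _
    have hb : m - tmap (IP.mkQ m) ∈ IP := by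
      refine (Submodule.Quotient.mk_eq_zero IP).mp ?_
      show IP.mkQ (m - tmap (IP.mkQ m)) = 0
      rw [map_sub, ht, sub_self]
    refine Submodule.mem_sup.mpr
      ⟨tmap (IP.mkQ m), ⟨Submodule.Quotient.mk ((1 : MonoidAlgebra R π) ⊗ₜ[R] IP.mkQ m), hfone _⟩,
        m - tmap (IP.mkQ m), ?_, by abel⟩
    exact hb
  have hfsurj : Function.Surjective f := by
    have := eq_top_of_sup_DD (R := R) (π_p : Subgroup π) hn0 (LinearMap.range f) hsup
    exact LinearMap.range_eq_top.mp this
  -- relations in the quotient tensor product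
  have hdiffrel : ∀ (b : MonoidAlgebra R (π ⧸ (π_p : Subgroup π))) (q : P ⧸ IP),
      (σ b) ⊗ₜ[R] q - (1 : MonoidAlgebra R π) ⊗ₜ[R] (b • q) ∈ rel := by
    intro b q
    induction b using MonoidAlgebra.induction_on with
    | of g =>
      rw [hσ_of]
      exact Submodule.subset_span ⟨g, q, rfl⟩
    | add u v hu hv =>
      have heq : σ (u + v) ⊗ₜ[R] q - (1 : MonoidAlgebra R π) ⊗ₜ[R] ((u + v) • q)
          = (σ u ⊗ₜ[R] q - (1 : MonoidAlgebra R π) ⊗ₜ[R] (u • q))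
            + (σ v ⊗ₜ[R] q - (1 : MonoidAlgebra R π) ⊗ₜ[R] (v • q)) := by
        rw [map_add, TensorProduct.add_tmul, add_smul, TensorProduct.tmul_add]
        abel
      rw [heq]
      exact Submodule.add_mem _ hu hv
    | smul r b hb =>
      have h1 : σ (r • b) = algebraMap R (MonoidAlgebra R π) r * σ b := by
        rw [Algebra.smul_def, map_mul, hσalg]
      have h3 : σ (r • b) ⊗ₜ[R] q - (1 : MonoidAlgebra R π) ⊗ₜ[R] ((r • b) • q)
          = algebraMap R (MonoidAlgebra R π) r
            • ((σ b) ⊗ₜ[R] q - (1 : MonoidAlgebra R π) ⊗ₜ[R] (b • q)) := by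
        rw [smul_sub]
        congr 1
        · rw [h1, TensorProduct.smul_tmul', smul_eq_mul]
        · have h2 : ((r • b) • q : P ⧸ IP) = r • (b • q) := by
            show σ (r • b) • q = algebraMap R (MonoidAlgebra R π) r • (σ b • q)
            rw [h1, mul_smul]
          rw [h2, TensorProduct.tmul_smul]
          have h4 : (algebraMap R (MonoidAlgebra R π) r)
              • ((1 : MonoidAlgebra R π) ⊗ₜ[R] (b • q))
              = (algebraMap R (MonoidAlgebra R π) r * 1) ⊗ₜ[R] (b • q) := by
            rw [TensorProduct.smul_tmul', smul_eq_mul]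
          rw [h4, mul_one]
          have h5 : (r • ((1 : MonoidAlgebra R π) ⊗ₜ[R] (b • q)) : _)
              = (r • (1 : MonoidAlgebra R π)) ⊗ₜ[R] (b • q) := TensorProduct.smul_tmul' r _ _
          rw [h5, Algebra.smul_def, mul_one]
      rw [h3]
      exact Submodule.smul_mem _ _ hb
  -- every kernel element sits in DD ⊤ of the quotient module
  have hkerD : ∀ c : MonoidAlgebra R π, φ c = 0 → ∀ q : P ⧸ IP,
      (Submodule.Quotient.mk (c ⊗ₜ[R] q) : _ ⧸ rel)
        ∈ DD (R := R) (π_p : Subgroup π) ⊤ := by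
    intro c hc
    have hc' : MonoidAlgebra.mapDomain (fun x : π => (x : π ⧸ (π_p : Subgroup π))) c = 0 := hc
    have hsp := ker_mapDomain_le (R := R) (π_p : Subgroup π) c hc'
    refine Submodule.span_induction
      (p := fun c _ => ∀ q : P ⧸ IP,
        (Submodule.Quotient.mk (c ⊗ₜ[R] q) : _ ⧸ rel)
          ∈ DD (R := R) (π_p : Subgroup π) ⊤) ?_ ?_ ?_ ?_ hsp
    · rintro x ⟨g, h, hh, rfl⟩ q
      have h1 : (of R π g * ((of R π h : MonoidAlgebra R π) - 1)) ⊗ₜ[R] q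
          = (of R π g * ((of R π h : MonoidAlgebra R π) - 1))
            • ((1 : MonoidAlgebra R π) ⊗ₜ[R] q) := by
        rw [TensorProduct.smul_tmul', smul_eq_mul, mul_one]
      rw [h1, Submodule.Quotient.mk_smul, mul_smul]
      exact Submodule.smul_mem _ _
        (mem_DD (π_p : Subgroup π) ⊤ hh _ Submodule.mem_top)
    · intro q
      rw [TensorProduct.zero_tmul]
      rw [Submodule.Quotient.mk_zero]
      exact Submodule.zero_mem _
    · intro x y _ _ hx hy q
      rw [TensorProduct.add_tmul, Submodule.Quotient.mk_add]
      exact Submodule.add_mem _ (hx q) (hy q)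
    · intro r x _ hx q
      have h1 : (r • x) ⊗ₜ[R] q
          = algebraMap R (MonoidAlgebra R π) r • (x ⊗ₜ[R] q) := by
        rw [TensorProduct.smul_tmul', smul_eq_mul, Algebra.smul_def]
      rw [h1, Submodule.Quotient.mk_smul]
      exact Submodule.smul_mem _ _ (hx q)
  have C1 : ∀ w : TensorProduct R (MonoidAlgebra R π) (P ⧸ IP), ∃ q : P ⧸ IP,
      (Submodule.Quotient.mk w : _ ⧸ rel)
        - Submodule.Quotient.mk ((1 : MonoidAlgebra R π) ⊗ₜ[R] q)
        ∈ DD (R := R) (π_p : Subgroup π) ⊤ := by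
    intro w
    induction w using TensorProduct.induction_on with
    | zero =>
      refine ⟨0, ?_⟩
      rw [TensorProduct.tmul_zero]
      simp
    | tmul a q =>
      refine ⟨φ a • q, ?_⟩
      have he : (Submodule.Quotient.mk (σ (φ a) ⊗ₜ[R] q) : _ ⧸ rel)
          = Submodule.Quotient.mk ((1 : MonoidAlgebra R π) ⊗ₜ[R] (φ a • q)) :=
        (Submodule.Quotient.eq rel).mpr (hdiffrel (φ a) q)
      have hd := hkerD (a - σ (φ a)) (by rw [map_sub, hφσ, sub_self]) q
      have hsplit2 : (Submodule.Quotient.mk (a ⊗ₜ[R] q) : _ ⧸ rel)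
          - Submodule.Quotient.mk ((1 : MonoidAlgebra R π) ⊗ₜ[R] (φ a • q))
          = Submodule.Quotient.mk ((a - σ (φ a)) ⊗ₜ[R] q) := by
        rw [← he, ← Submodule.Quotient.mk_sub, TensorProduct.sub_tmul]
      rw [hsplit2]
      exact hd
    | add w1 w2 h1 h2 =>
      obtain ⟨q1, hq1⟩ := h1
      obtain ⟨q2, hq2⟩ := h2
      refine ⟨q1 + q2, ?_⟩
      have : (Submodule.Quotient.mk (w1 + w2) : _ ⧸ rel)
          - Submodule.Quotient.mk ((1 : MonoidAlgebra R π) ⊗ₜ[R] (q1 + q2))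
          = ((Submodule.Quotient.mk w1 : _ ⧸ rel)
              - Submodule.Quotient.mk ((1 : MonoidAlgebra R π) ⊗ₜ[R] q1))
            + ((Submodule.Quotient.mk w2 : _ ⧸ rel)
              - Submodule.Quotient.mk ((1 : MonoidAlgebra R π) ⊗ₜ[R] q2)) := by
        rw [TensorProduct.tmul_add, Submodule.Quotient.mk_add, Submodule.Quotient.mk_add]
        abel
      rw [this]
      exact Submodule.add_mem _ hq1 hq2
  have hfD : ∀ y ∈ DD (R := R) (π_p : Subgroup π)
      (⊤ : Submodule (MonoidAlgebra R π) ((TensorProduct R (MonoidAlgebra R π) (P ⧸ IP)) ⧸ rel)),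
      f y ∈ IP := by
    intro y hy
    rw [DD] at hy
    refine Submodule.span_induction (p := fun y _ => f y ∈ IP) ?_ ?_ ?_ ?_ hy
    · rintro x ⟨h, hh, mm, _, rfl⟩
      rw [map_smul]
      exact mem_DD (π_p : Subgroup π) ⊤ hh _ Submodule.mem_top
    · show f 0 ∈ IP
      rw [map_zero]; exact Submodule.zero_mem _
    · intro x y _ _ hx hy
      show f (x + y) ∈ IP
      rw [map_add]; exact Submodule.add_mem _ hx hy
    · intro a x _ hx
      show f (a • x) ∈ IP
      rw [map_smul]; exact Submodule.smul_mem _ _ hx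
  have hkerle : LinearMap.ker f ≤ DD (R := R) (π_p : Subgroup π) ⊤ := by
    intro x hx
    obtain ⟨w, rfl⟩ := Submodule.Quotient.mk_surjective rel x
    obtain ⟨q, hq⟩ := C1 w
    have hfx : f (Submodule.Quotient.mk w) = 0 := hx
    have h5 : f ((Submodule.Quotient.mk w : _ ⧸ rel)
        - Submodule.Quotient.mk ((1 : MonoidAlgebra R π) ⊗ₜ[R] q)) = - tmap q := by
      rw [map_sub, hfx, hfone, zero_sub]
    have h6 := hfD _ hq
    rw [h5] at h6
    have h7 : tmap q ∈ IP := by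
      have := IP.neg_mem h6
      rwa [neg_neg] at this
    have h8 : q = 0 := by
      rw [← ht q]
      exact (Submodule.Quotient.mk_eq_zero IP).mpr h7
    rw [h8, TensorProduct.tmul_zero] at hq
    simpa using hq
  obtain ⟨uu, huu⟩ := Module.projective_lifting_property f LinearMap.id hfsurj
  have htop2 : (⊤ : Submodule (MonoidAlgebra R π)
      ((TensorProduct R (MonoidAlgebra R π) (P ⧸ IP)) ⧸ rel))
      ≤ LinearMap.range uu ⊔ LinearMap.ker f := by
    intro x _
    refine Submodule.mem_sup.mpr ⟨uu (f x), ⟨f x, rfl⟩, x - uu (f x), ?_, by abel⟩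
    rw [LinearMap.mem_ker, map_sub]
    have huux : f (uu (f x)) = f x := DFunLike.congr_fun huu (f x)
    rw [huux, sub_self]
  have hKD : LinearMap.ker f ≤ DD (R := R) (π_p : Subgroup π) (LinearMap.ker f) := by
    intro x hx
    have h1 : x ∈ DD (R := R) (π_p : Subgroup π) ⊤ := hkerle hx
    have h2 : x ∈ LinearMap.range uu ⊔ DD (R := R) (π_p : Subgroup π) (LinearMap.ker f) := by
      refine (le_trans (DD_mono (π_p : Subgroup π) htop2)
        (DD_sup (π_p : Subgroup π) _ _)) h1
    obtain ⟨v, hv, d, hd, hvd⟩ := Submodule.mem_sup.mp h2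
    have hdK : d ∈ LinearMap.ker f := DD_le (π_p : Subgroup π) _ hd
    have hvK : v ∈ LinearMap.ker f := by
      rw [LinearMap.mem_ker]
      have : f x = 0 := hx
      have h3 : f v + f d = f x := by rw [← map_add, hvd]
      rw [LinearMap.mem_ker] at hdK
      rw [hdK, add_zero] at h3
      rw [h3, this]
    obtain ⟨y, rfl⟩ := hv
    have hy0 : y = 0 := by
      have h4 := DFunLike.congr_fun huu y
      rw [LinearMap.mem_ker] at hvK
      simpa [hvK] using h4.symm
    rw [hy0, map_zero, zero_add] at hvd
    rw [← hvd]
    exact hd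
  have hker0 : LinearMap.ker f = ⊥ :=
    eq_bot_of_le_DD (R := R) (π_p : Subgroup π) hn0 (LinearMap.ker f) hKD
  have hfinj : Function.Injective f := LinearMap.ker_eq_bot.mp hker0
  exact ⟨P ⧸ IP, inferInstance, instR0, instB0, instTower0, finB, projB,
    ⟨(LinearEquiv.ofBijective f ⟨hfinj, hfsurj⟩).symm⟩⟩

end Main
end

section
/- Let (R,𝔐) be a commutative artinian local ring and let π be a finite cyclic group. Then for every finitely generated indecomposable projective Rπ-module P, every Jordan–Hölder composition factor of P is isomorphic to the simple module P/rad(Rπ)P; equivalently, the Cartan matrix of Rπ is a diagonal matrix with non-zero diagonal entries. -/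
/-!
Statement 19 (Step 2 in the proof of Theorem 1.5): Let `(R, 𝔐)` be a commutative artinian
local ring and `π` a finite cyclic group.  For every finitely generated indecomposable
projective `Rπ`-module `P`, every Jordan–Hölder composition factor of `P` (i.e. every simple
subquotient `N/N'`, `N' ≤ N ≤ P`) is isomorphic to the simple module `P/rad(Rπ)P`; this says
exactly that the Cartan matrix of `Rπ` is diagonal with non-zero diagonal entries.
-/

universe u

/-- A module is indecomposable if it is nonzero and is not the (internal) direct sum of two
nonzero submodules. -/
def IsIndecomposableModule (A : Type u) [Ring A] (M : Type u) [AddCommGroup M] [Module A M] :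
    Prop :=
  Nontrivial M ∧ ∀ N N' : Submodule A M, IsCompl N N' → N = ⊥ ∨ N' = ⊥

/-- The submodule `J·M` of a module `M`, where `J = rad A` is the Jacobson radical. -/
def radSMul (A : Type u) [Ring A] (M : Type u) [AddCommGroup M] [Module A M] :
    Submodule A M :=
  Submodule.span A {y | ∃ r ∈ Ideal.jacobson (⊥ : Ideal A), ∃ x : M, y = r • x}

lemma radSMul_eq_smul_top (A : Type u) [CommRing A] (M : Type u) [AddCommGroup M] [Module A M] :
    radSMul A M = (Ideal.jacobson (⊥ : Ideal A)) • (⊤ : Submodule A M) := by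
  apply le_antisymm
  · rw [radSMul, Submodule.span_le]
    rintro y ⟨r, hr, x, rfl⟩
    exact Submodule.smul_mem_smul hr Submodule.mem_top
  · exact Submodule.smul_le.mpr fun r hr n _ => Submodule.subset_span ⟨r, hr, n, rfl⟩

lemma simple_iso_quot {A : Type u} [CommRing A] {M : Type u} [AddCommGroup M] [Module A M]
    (h : IsSimpleModule A M) (c : A) (hc : ∀ x : M, c • x = 0) :
    ∃ 𝔪 : Ideal A, 𝔪.IsMaximal ∧ c ∈ 𝔪 ∧ Nonempty (M ≃ₗ[A] (A ⧸ 𝔪)) := by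
  haveI := h
  haveI : Nontrivial M := IsSimpleModule.nontrivial A M
  obtain ⟨x, hx⟩ := exists_ne (0 : M)
  set f := LinearMap.toSpanSingleton A M x with hf
  have hrange : LinearMap.range f = ⊤ := by
    rcases eq_bot_or_eq_top (LinearMap.range f) with hb | ht
    · exfalso
      apply hx
      have : f 1 ∈ LinearMap.range f := ⟨1, rfl⟩
      rw [hb, Submodule.mem_bot] at this
      simpa [hf, LinearMap.toSpanSingleton_apply] using this
    · exact ht
  have hsurj : Function.Surjective f := LinearMap.range_eq_top.mp hrange
  have equiv := f.quotKerEquivOfSurjective hsurj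
  haveI : IsSimpleModule A (A ⧸ LinearMap.ker f) := IsSimpleModule.congr equiv
  refine ⟨LinearMap.ker f, ?_, ?_, ⟨equiv.symm⟩⟩
  · exact Ideal.isMaximal_def.mpr (isSimpleModule_iff_isCoatom.mp ‹_›)
  · simp only [LinearMap.mem_ker, hf, LinearMap.toSpanSingleton_apply]
    exact hc x

lemma exists_idempotent {A : Type u} [CommRing A] [IsArtinianRing A]
    (P : Type u) [AddCommGroup P] [Module A P]
    (hindec : IsIndecomposableModule A P) :
    ∃ (e : A) (𝔪₀ : Ideal A), 𝔪₀.IsMaximal ∧ e * e = e ∧ (∀ x : P, e • x = x) ∧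
      (1 - e) ∈ 𝔪₀ ∧ (∀ 𝔪 : Ideal A, 𝔪.IsMaximal → 𝔪 ≠ 𝔪₀ → e ∈ 𝔪) := by
  classical
  obtain ⟨hP, hdec⟩ := hindec
  haveI := hP
  have hA : Nontrivial A := by
    by_contra hh
    haveI := not_nontrivial_iff_subsingleton.mp hh
    exact (not_subsingleton_iff_nontrivial.mpr hP) (Module.subsingleton A P)
  obtain ⟨n, hn⟩ := IsArtinianRing.isNilpotent_jacobson_bot (R := A)
  have hn0 : n ≠ 0 := by
    rintro rfl
    rw [pow_zero, Ideal.one_eq_top] at hn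
    exact top_ne_bot (hn.trans rfl)
  set S : Finset (Ideal A) := (IsArtinianRing.setOfPred_isMaximal_finite A).toFinset with hSdef
  have hmemS : ∀ 𝔪 : Ideal A, 𝔪 ∈ S ↔ 𝔪.IsMaximal := by
    intro 𝔪; simp [hSdef, Set.Finite.mem_toFinset]
  have hprod_bot : (∏ 𝔪 ∈ S, 𝔪 ^ n) = ⊥ := by
    have h1 : (∏ 𝔪 ∈ S, 𝔪 ^ n) = (∏ 𝔪 ∈ S, 𝔪) ^ n := by
      rw [Finset.prod_pow]
    have h2 : (∏ 𝔪 ∈ S, 𝔪) ≤ Ideal.jacobson (⊥ : Ideal A) := by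
      rw [Ideal.jacobson]
      refine le_sInf ?_
      rintro J ⟨-, hJ⟩
      exact le_trans Ideal.prod_le_inf (Finset.inf_le ((hmemS J).mpr hJ))
    have h3 : (∏ 𝔪 ∈ S, 𝔪) ^ n ≤ (Ideal.jacobson (⊥ : Ideal A)) ^ n :=
      Ideal.pow_right_mono h2 n
    rw [hn] at h3
    rw [h1]
    exact le_bot_iff.mp h3
  have key : ∀ 𝔪 ∈ S, ∃ e : A,
      (1 - e) ∈ 𝔪 ^ n ∧ e ∈ (∏ 𝔪' ∈ S.erase 𝔪, 𝔪' ^ n) := by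
    intro 𝔪 h𝔪
    have hcop : IsCoprime (𝔪 ^ n) (∏ 𝔪' ∈ S.erase 𝔪, 𝔪' ^ n) := by
      refine IsCoprime.prod_right fun 𝔪' h𝔪' => ?_
      have h1 : 𝔪' ∈ S := Finset.mem_of_mem_erase h𝔪'
      have hne : 𝔪 ≠ 𝔪' := (Finset.ne_of_mem_erase h𝔪').symm
      exact (Ideal.isCoprime_iff_sup_eq.mpr
        (Ideal.IsMaximal.coprime_of_ne ((hmemS 𝔪).mp h𝔪) ((hmemS 𝔪').mp h1) hne)).pow
    rw [Ideal.isCoprime_iff_sup_eq] at hcop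
    have h1 : (1 : A) ∈ 𝔪 ^ n ⊔ ∏ 𝔪' ∈ S.erase 𝔪, 𝔪' ^ n := hcop ▸ Submodule.mem_top
    obtain ⟨u, hu, v, hv, huv⟩ := Submodule.mem_sup.mp h1
    refine ⟨v, ?_, hv⟩
    have : (1 : A) - v = u := by rw [← huv]; ring
    rw [this]; exact hu
  choose eF heF1 heF2 using key
  have hex : ∃ t : {𝔪 // 𝔪 ∈ S}, ∃ x : P, eF t.1 t.2 • x ≠ 0 := by
    by_contra hcon
    push_neg at hcon
    have hexp : ∀ x : P, (∏ t ∈ S.attach, (1 - eF t.1 t.2)) • x = x := by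
      intro x
      induction S.attach using Finset.induction with
      | empty => simp
      | insert a s hni ih =>
        rw [Finset.prod_insert hni, mul_smul, ih]
        rw [sub_smul, one_smul, hcon a x, sub_zero]
    have hzero : (∏ t ∈ S.attach, (1 - eF t.1 t.2)) = 0 := by
      have hmem : (∏ t ∈ S.attach, (1 - eF t.1 t.2)) ∈ ∏ t ∈ S.attach, (t.1 ^ n) :=
        Ideal.prod_mem_prod fun t _ => heF1 t.1 t.2
      have heq : (∏ t ∈ S.attach, (t.1 ^ n)) = ∏ 𝔪 ∈ S, 𝔪 ^ n := by
        rw [← Finset.prod_attach S (fun 𝔪 => 𝔪 ^ n)]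
      rw [heq, hprod_bot] at hmem
      exact (Submodule.mem_bot A).mp hmem
    obtain ⟨x, y, hxy⟩ := hP
    apply hxy
    have hx := hexp x; have hy := hexp y
    rw [hzero, zero_smul] at hx hy
    rw [← hx, ← hy]
  obtain ⟨⟨𝔪₀, h𝔪₀⟩, x₀, hx₀⟩ := hex
  set e₀ := eF 𝔪₀ h𝔪₀ with he₀def
  have hprod_e : e₀ * (1 - e₀) = 0 := by
    have hmem : e₀ * (1 - e₀) ∈ (∏ 𝔪' ∈ S.erase 𝔪₀, 𝔪' ^ n) * 𝔪₀ ^ n :=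
      Ideal.mul_mem_mul (heF2 𝔪₀ h𝔪₀) (heF1 𝔪₀ h𝔪₀)
    rw [Finset.prod_erase_mul S _ h𝔪₀, hprod_bot] at hmem
    exact (Submodule.mem_bot A).mp hmem
  have hee : e₀ * e₀ = e₀ := by
    have : e₀ - e₀ * e₀ = 0 := by rw [← hprod_e]; ring
    linear_combination -this
  -- complementary submodules
  set N₁ : Submodule A P := LinearMap.range (LinearMap.lsmul A P e₀) with hN₁
  set N₂ : Submodule A P := LinearMap.range (LinearMap.lsmul A P (1 - e₀)) with hN₂
  have hcompl : IsCompl N₁ N₂ := by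
    constructor
    · rw [disjoint_iff, Submodule.eq_bot_iff]
      rintro y ⟨hy₁, hy₂⟩
      obtain ⟨a, rfl⟩ := hy₁
      obtain ⟨b, hb⟩ := hy₂
      have h1 : e₀ • (LinearMap.lsmul A P e₀ a) = LinearMap.lsmul A P e₀ a := by
        simp only [LinearMap.lsmul_apply, smul_smul, hee]
      have h2 : e₀ • (LinearMap.lsmul A P (1 - e₀) b) = 0 := by
        simp only [LinearMap.lsmul_apply, smul_smul]
        rw [hprod_e, zero_smul]
      rw [← h1, ← hb, h2]
    · rw [codisjoint_iff, eq_top_iff]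
      intro x _
      refine Submodule.mem_sup.mpr ⟨e₀ • x, ⟨x, rfl⟩, (1 - e₀) • x, ⟨x, rfl⟩, ?_⟩
      rw [← add_smul]
      simp
  have hone : ∀ x : P, e₀ • x = x := by
    rcases hdec N₁ N₂ hcompl with h | h
    · exfalso
      apply hx₀
      have : e₀ • x₀ ∈ N₁ := ⟨x₀, rfl⟩
      rw [h, Submodule.mem_bot] at this
      exact this
    · intro x
      have : (1 - e₀) • x ∈ N₂ := ⟨x, rfl⟩
      rw [h, Submodule.mem_bot, sub_smul, one_smul, sub_eq_zero] at this
      exact this.symm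
  refine ⟨e₀, 𝔪₀, (hmemS 𝔪₀).mp h𝔪₀, hee, hone, ?_, ?_⟩
  · exact Ideal.pow_le_self hn0 (heF1 𝔪₀ h𝔪₀)
  · intro 𝔪 hm hne
    have h𝔪S : 𝔪 ∈ S := (hmemS 𝔪).mpr hm
    have h𝔪e : 𝔪 ∈ S.erase 𝔪₀ := Finset.mem_erase.mpr ⟨hne, h𝔪S⟩
    have h1 : (∏ 𝔪' ∈ S.erase 𝔪₀, 𝔪' ^ n) ≤ 𝔪 ^ n :=
      le_trans Ideal.prod_le_inf (Finset.inf_le h𝔪e)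
    exact Ideal.pow_le_self hn0 (h1 (heF2 𝔪₀ h𝔪₀))

lemma main_comm {A : Type u} [CommRing A] [IsArtinianRing A]
    (P : Type u) [AddCommGroup P] [Module A P] [Module.Finite A P]
    (hproj : Module.Projective A P) (hindec : IsIndecomposableModule A P)
    (N' N : Submodule A P)
    (hs : IsSimpleModule A (↥N ⧸ Submodule.comap N.subtype N')) :
    Nonempty ((↥N ⧸ Submodule.comap N.subtype N') ≃ₗ[A] (P ⧸ radSMul A P)) := by
  classical
  obtain ⟨e, 𝔪₀, hmax, hee, heP, h1e𝔪₀, hother⟩ := exists_idempotent P hindec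
  have huniq : ∀ 𝔪 : Ideal A, 𝔪.IsMaximal → (1 - e) ∈ 𝔪 → 𝔪 = 𝔪₀ := by
    intro 𝔪 hm hmem
    by_contra hne
    have he𝔪 := hother 𝔪 hm hne
    have h1 : (1 : A) ∈ 𝔪 := by
      have := Ideal.add_mem 𝔪 hmem he𝔪
      rwa [sub_add_cancel] at this
    exact hm.ne_top ((Ideal.eq_top_iff_one 𝔪).mpr h1)
  -- the simple subquotient is isomorphic to A ⧸ 𝔪₀
  have hkill : ∀ x : (↥N ⧸ Submodule.comap N.subtype N'), (1 - e) • x = 0 := by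
    intro x
    obtain ⟨y, rfl⟩ := Submodule.Quotient.mk_surjective _ x
    have hy : (1 - e) • y = 0 := by
      apply Subtype.ext
      show ((1 - e) • y : ↥N).val = (0 : P)
      rw [Submodule.coe_smul, sub_smul, one_smul, heP, sub_self]
    rw [← Submodule.Quotient.mk_smul, hy, Submodule.Quotient.mk_zero]
  obtain ⟨𝔪, hm, hcm, ⟨isoS⟩⟩ := simple_iso_quot hs (1 - e) hkill
  have h𝔪eq : 𝔪 = 𝔪₀ := huniq 𝔪 hm hcm
  rw [h𝔪eq] at isoS
  -- the quotient ring B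
  set I : Ideal A := Ideal.span {1 - e} with hIdef
  have htor : Module.IsTorsionBy A P (1 - e) := by
    intro x
    rw [sub_smul, one_smul, heP x, sub_self]
  have htorS : Module.IsTorsionBySet A P I :=
    (Module.isTorsionBySet_span_singleton_iff _).mpr htor
  letI : Module (A ⧸ I) P := htorS.module
  haveI : IsScalarTower A (A ⧸ I) P := Module.IsTorsionBySet.isScalarTower htorS
  have hInetop : I ≠ ⊤ := by
    intro hITop
    have h1 : (1 : A) ∈ I := hITop ▸ Submodule.mem_top
    obtain ⟨a, ha⟩ := Ideal.mem_span_singleton'.mp h1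
    have he0 : e = 0 := by
      have h2 : e * (a * (1 - e)) = e * 1 := by rw [ha]
      calc e = e * 1 := (mul_one e).symm
        _ = e * (a * (1 - e)) := h2.symm
        _ = a * (e * (1 - e)) := by ring
        _ = a * (e - e * e) := by ring
        _ = a * 0 := by rw [hee, sub_self]
        _ = 0 := mul_zero a
    obtain ⟨x, y, hxy⟩ := hindec.1
    apply hxy
    have hx : (1 - e) • x = 0 := @htor x
    have hy : (1 - e) • y = 0 := @htor y
    rw [he0, sub_zero, one_smul] at hx hy
    rw [hx, hy]
  haveI : Nontrivial (A ⧸ I) := Ideal.Quotient.nontrivial_iff.mpr hInetop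
  have hcomap : ∀ K : Ideal (A ⧸ I), K.IsMaximal →
      K.comap (Ideal.Quotient.mk I) = 𝔪₀ := by
    intro K hK
    apply huniq
    · exact Ideal.comap_isMaximal_of_surjective _ Ideal.Quotient.mk_surjective
    · show Ideal.Quotient.mk I (1 - e) ∈ K
      have hz : Ideal.Quotient.mk I (1 - e) = 0 :=
        Ideal.Quotient.eq_zero_iff_mem.mpr (Ideal.subset_span rfl)
      rw [hz]; exact K.zero_mem
  haveI : IsLocalRing (A ⧸ I) := by
    apply IsLocalRing.of_unique_max_ideal
    obtain ⟨Jm, hJm⟩ := Ideal.exists_maximal (A ⧸ I)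
    refine ⟨Jm, hJm, fun J hJ => ?_⟩
    exact Ideal.comap_injective_of_surjective _ Ideal.Quotient.mk_surjective
      ((hcomap J hJ).trans (hcomap Jm hJm).symm)
  -- P is finite free over B := A ⧸ I
  haveI hBfin : Module.Finite (A ⧸ I) P := Module.Finite.of_restrictScalars_finite A (A ⧸ I) P
  haveI hBproj : Module.Projective (A ⧸ I) P := by
    obtain ⟨s, hs⟩ := Module.projective_def.mp hproj
    set ρ : (P →₀ A) →ₗ[A] (P →₀ (A ⧸ I)) :=
      Finsupp.mapRange.linearMap (Algebra.linearMap A (A ⧸ I)) with hρ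
    have hsurj : Function.Surjective (algebraMap A (A ⧸ I)) := Ideal.Quotient.mk_surjective
    set t : P →ₗ[A ⧸ I] (P →₀ (A ⧸ I)) :=
      (ρ.comp s).extendScalarsOfSurjective hsurj with ht
    refine Module.projective_def.mpr ⟨t, fun x => ?_⟩
    have h1 : t x = Finsupp.mapRange (Ideal.Quotient.mk I) (map_zero _) (s x) := by
      rw [ht, LinearMap.extendScalarsOfSurjective_apply]
      rfl
    rw [h1, Finsupp.linearCombination_apply, Finsupp.sum_mapRange_index (by simp)]
    have h2 : ((s x).sum fun p a => (Ideal.Quotient.mk I a) • (id p : P)) =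
        ((s x).sum fun p a => a • (id p : P)) := by
      apply Finsupp.sum_congr
      intro p _
      exact Module.IsTorsionBySet.mk_smul htorS _ _
    rw [h2]
    have := hs x
    rwa [Finsupp.linearCombination_apply] at this
  haveI : Module.FinitePresentation (A ⧸ I) P :=
    Module.finitePresentation_of_projective (A ⧸ I) P
  haveI hBfree : Module.Free (A ⧸ I) P := Module.free_of_flat_of_isLocalRing
  set ι := Module.Free.ChooseBasisIndex (A ⧸ I) P with hι
  let b : Module.Basis ι (A ⧸ I) P := Module.Free.chooseBasis (A ⧸ I) P
  -- restriction of scalars preserves complements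
  have hres : ∀ M₁ M₂ : Submodule (A ⧸ I) P, IsCompl M₁ M₂ →
      IsCompl (M₁.restrictScalars A) (M₂.restrictScalars A) := by
    intro M₁ M₂ h
    constructor
    · rw [disjoint_iff, Submodule.eq_bot_iff]
      rintro x ⟨h1, h2⟩
      exact (Submodule.eq_bot_iff _).mp (disjoint_iff.mp h.1) x ⟨h1, h2⟩
    · rw [codisjoint_iff, eq_top_iff]
      intro x _
      have hx : x ∈ M₁ ⊔ M₂ := by rw [codisjoint_iff.mp h.2]; trivial
      obtain ⟨y, hy, z, hz, rfl⟩ := Submodule.mem_sup.mp hx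
      exact Submodule.mem_sup.mpr ⟨y, hy, z, hz, rfl⟩
  haveI hsing : Subsingleton ι := by
    by_contra hss
    obtain ⟨i, j, hij⟩ := not_subsingleton_iff_nontrivial.mp hss
    set oi := Submodule.orderIsoMapComap (b.repr.symm)
    have hC : IsCompl (Finsupp.supported (A ⧸ I) (A ⧸ I) {i})
        (Finsupp.supported (A ⧸ I) (A ⧸ I) ({i}ᶜ : Set ι)) := by
      constructor
      · exact Finsupp.disjoint_supported_supported disjoint_compl_right
      · rw [codisjoint_iff, ← Finsupp.supported_union, Set.union_compl_self,
          Finsupp.supported_univ]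
    have hC2 := hres _ _ ⟨(oi.isCompl hC).1, (oi.isCompl hC).2⟩
    rcases hindec.2 _ _ hC2 with h | h
    · rw [Submodule.restrictScalars_eq_bot_iff] at h
      have : Finsupp.supported (A ⧸ I) (A ⧸ I) ({i} : Set ι) = ⊥ := by
        have := congrArg (oi.symm) h
        rwa [OrderIso.symm_apply_apply, map_bot] at this
      have hmem := Finsupp.single_mem_supported (A ⧸ I) (1 : A ⧸ I) (Set.mem_singleton i)
      rw [this, Submodule.mem_bot] at hmem
      exact one_ne_zero (Finsupp.single_eq_zero.mp hmem)
    · rw [Submodule.restrictScalars_eq_bot_iff] at h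
      have : Finsupp.supported (A ⧸ I) (A ⧸ I) ({i}ᶜ : Set ι) = ⊥ := by
        have := congrArg (oi.symm) h
        rwa [OrderIso.symm_apply_apply, map_bot] at this
      have hmem := Finsupp.single_mem_supported (R := A ⧸ I) (s := ({i}ᶜ : Set ι))
        (1 : A ⧸ I) (by simpa using hij.symm)
      rw [this, Submodule.mem_bot] at hmem
      exact one_ne_zero (Finsupp.single_eq_zero.mp hmem)
  haveI hne : Nonempty ι := by
    by_contra h
    haveI := not_nonempty_iff.mp h
    haveI : Subsingleton (ι →₀ (A ⧸ I)) := inferInstance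
    haveI : Subsingleton P := b.repr.toEquiv.subsingleton
    exact (not_subsingleton_iff_nontrivial.mpr hindec.1) this
  letI : Unique ι := ⟨⟨Classical.arbitrary ι⟩, fun x => Subsingleton.elim _ _⟩
  let eB : P ≃ₗ[A ⧸ I] (A ⧸ I) :=
    b.repr.trans (Finsupp.LinearEquiv.finsuppUnique (A ⧸ I) (A ⧸ I) ι)
  let eA : P ≃ₗ[A] (A ⧸ I) := eB.restrictScalars A
  set Jc := Ideal.jacobson (⊥ : Ideal A) with hJc
  have hmap : Submodule.map (eA : P →ₗ[A] (A ⧸ I)) (radSMul A P) =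
      (Jc • ⊤ : Submodule A (A ⧸ I)) := by
    rw [radSMul_eq_smul_top, Submodule.map_smul'', Submodule.map_top, LinearEquiv.range]
  let q1 : (P ⧸ radSMul A P) ≃ₗ[A] ((A ⧸ I) ⧸ (Jc • ⊤ : Submodule A (A ⧸ I))) :=
    Submodule.Quotient.equiv _ _ eA hmap
  -- A ⧸ 𝔪₀ ≃ (A ⧸ I) ⧸ Jc • ⊤
  set ψ : A →ₗ[A] (A ⧸ I) := Algebra.linearMap A (A ⧸ I) with hψ
  have hψs : Function.Surjective ψ := Ideal.Quotient.mk_surjective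
  set φ : A →ₗ[A] ((A ⧸ I) ⧸ (Jc • ⊤ : Submodule A (A ⧸ I))) :=
    (Jc • ⊤ : Submodule A (A ⧸ I)).mkQ.comp ψ with hφ
  have hφs : Function.Surjective φ := (Submodule.mkQ_surjective _).comp hψs
  have hJB : (Jc • ⊤ : Submodule A (A ⧸ I)) =
      Submodule.map ψ (Jc • ⊤ : Submodule A A) := by
    rw [Submodule.map_smul'', Submodule.map_top, LinearMap.range_eq_top.mpr hψs]
  have hJtop : (Jc • ⊤ : Submodule A A) = (Jc : Submodule A A) := by
    apply le_antisymm
    · refine Submodule.smul_le.mpr fun r hr x _ => ?_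
      rw [smul_eq_mul]
      exact Ideal.mul_mem_right x _ hr
    · intro a ha
      have := Submodule.smul_mem_smul ha (Submodule.mem_top (x := (1 : A)))
      simpa using this
  have hJle : Jc ≤ 𝔪₀ := by
    rw [hJc, Ideal.jacobson]
    exact sInf_le ⟨bot_le, hmax⟩
  have hIle : I ≤ 𝔪₀ := by
    rw [hIdef, Ideal.span_le]
    rintro y rfl
    exact h1e𝔪₀
  have hker : LinearMap.ker φ = 𝔪₀ := by
    ext a
    have hmem : a ∈ LinearMap.ker φ ↔ ψ a ∈ (Jc • ⊤ : Submodule A (A ⧸ I)) := by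
      rw [LinearMap.mem_ker, hφ, LinearMap.comp_apply, Submodule.mkQ_apply,
        Submodule.Quotient.mk_eq_zero]
    rw [hmem, hJB, hJtop]
    constructor
    · rintro ⟨band, hb, hba⟩
      have hsub : a - band ∈ I := by
        have : Ideal.Quotient.mk I band = Ideal.Quotient.mk I a := hba
        rw [Ideal.Quotient.mk_eq_mk_iff_sub_mem] at this
        have h4 : a - band = -(band - a) := by ring
        rw [h4]
        exact I.neg_mem this
      have : a = band + (a - band) := by ring
      rw [this]
      exact (sup_le hJle hIle : Jc ⊔ I ≤ 𝔪₀)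
        (Submodule.mem_sup.mpr ⟨band, hb, a - band, hsub, rfl⟩)
    · intro ha
      refine ⟨a * e, ?_, ?_⟩
      · rw [hJc, Ideal.jacobson]
        refine Submodule.mem_sInf.mpr ?_
        rintro J ⟨-, hJ⟩
        by_cases hJe : J = 𝔪₀
        · rw [hJe]; exact Ideal.mul_mem_right e _ ha
        · exact Ideal.mul_mem_left _ a (hother J hJ hJe)
      · show Ideal.Quotient.mk I (a * e) = Ideal.Quotient.mk I a
        rw [Ideal.Quotient.mk_eq_mk_iff_sub_mem]
        have h4 : a * e - a = -(a * (1 - e)) := by ring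
        rw [h4]
        exact I.neg_mem (Ideal.mem_span_singleton'.mpr ⟨a, rfl⟩)
  let q2 : (A ⧸ 𝔪₀) ≃ₗ[A] ((A ⧸ I) ⧸ (Jc • ⊤ : Submodule A (A ⧸ I))) :=
    (Submodule.quotEquivOfEq _ _ hker.symm).trans (φ.quotKerEquivOfSurjective hφs)
  exact ⟨isoS.trans (q2.trans q1.symm)⟩

theorem composition_factors_of_indecomposable_projective_cyclic
    (R : Type u) [CommRing R] [IsArtinianRing R] [IsLocalRing R]
    (π : Type u) [Group π] [Finite π] [IsCyclic π]
    (P : Type u) [AddCommGroup P] [Module (MonoidAlgebra R π) P]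
    [Module.Finite (MonoidAlgebra R π) P]
    (hproj : Module.Projective (MonoidAlgebra R π) P)
    (hindec : IsIndecomposableModule (MonoidAlgebra R π) P) :
    ∀ N' N : Submodule (MonoidAlgebra R π) P, N' ≤ N →
      IsSimpleModule (MonoidAlgebra R π) (↥N ⧸ Submodule.comap N.subtype N') →
      Nonempty ((↥N ⧸ Submodule.comap N.subtype N') ≃ₗ[MonoidAlgebra R π]
        (P ⧸ radSMul (MonoidAlgebra R π) P)) := by
  intro N' N _hNN hs
  letI : CommGroup π := IsCyclic.commGroup
  letI : CommRing (MonoidAlgebra R π) := MonoidAlgebra.commRing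
  haveI : Module.Finite R (MonoidAlgebra R π) := MonoidAlgebra.moduleFinite
  haveI : IsArtinianRing (MonoidAlgebra R π) := IsArtinianRing.of_finite R (MonoidAlgebra R π)
  exact main_comm P hproj hindec N' N hs
end
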